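/- arXiv:2405.07150 — 7 statements merged into one kernel-verified Lean document; each statement's English description precedes it below -/
import Mathlib

section
/- Let 0 < m < 1, r ≥ 1 and let a, b be real numbers with 0 ≤ b ≤ a. Then (a-b)^r ≤ a^r - b^r ≤ 2^{2r/(m+1)-1} · (2r/(m+1)) · (a^{r-(m+1)/2} + b^{r-(m+1)/2}) · (a^{(m+1)/2} - b^{(m+1)/2}). -/
/-- Key lemma: for `0 ≤ y ≤ x` and `1 ≤ q`, `x^q - y^q ≤ q * x^(q-1) * (x - y)`. -/
lemma aux_rpow_sub_le (x y q : ℝ) (hy : 0 ≤ y) (hyx : y ≤ x) (hq : 1 ≤ q) :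
    x ^ q - y ^ q ≤ q * x ^ (q - 1) * (x - y) := by
  rcases eq_or_lt_of_le (hy.trans hyx) with h0 | hx
  · have hx0 : x = 0 := h0.symm
    have hy0 : y = 0 := le_antisymm (hx0 ▸ hyx) hy
    simp [hx0, hy0]
  · set t := y / x with ht
    have ht0 : 0 ≤ t := div_nonneg hy hx.le
    have hbern : 1 + q * (t - 1) ≤ (1 + (t - 1)) ^ q :=
      one_add_mul_self_le_rpow_one_add (by linarith) hq
    have htt : 1 + (t - 1) = t := by ring
    rw [htt] at hbern
    have hyeq : y = t * x := by rw [ht, div_mul_cancel₀ y hx.ne']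
    have hty : t ^ q * x ^ q = y ^ q := by
      rw [hyeq, Real.mul_rpow ht0 hx.le]
    have hxq : 0 < x ^ q := Real.rpow_pos_of_pos hx q
    have h1 : (1 + q * (t - 1)) * x ^ q ≤ t ^ q * x ^ q :=
      mul_le_mul_of_nonneg_right hbern hxq.le
    rw [hty] at h1
    have hxq1 : x ^ (q - 1) * x = x ^ q := by
      rw [← Real.rpow_add_one hx.ne' (q - 1)]; ring_nf
    have hxt : x - y = (1 - t) * x := by rw [hyeq]; ring
    calc x ^ q - y ^ q ≤ x ^ q - (1 + q * (t - 1)) * x ^ q := by linarith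
      _ = q * (1 - t) * x ^ q := by ring
      _ = q * x ^ (q - 1) * (x - y) := by rw [hxt, ← hxq1]; ring

/-- For `0 < m < 1`, `r ≥ 1` and `0 ≤ b ≤ a`, one has
`(a-b)^r ≤ a^r - b^r ≤ 2^(2r/(m+1)-1) * (2r/(m+1)) * (a^(r-(m+1)/2) + b^(r-(m+1)/2))
  * (a^((m+1)/2) - b^((m+1)/2))`, where powers are real powers. -/
theorem rpow_sub_rpow_bounds (m r a b : ℝ) (hm0 : 0 < m) (hm1 : m < 1) (hr : 1 ≤ r)
    (hb : 0 ≤ b) (hba : b ≤ a) :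
    (a - b) ^ r ≤ a ^ r - b ^ r ∧
      a ^ r - b ^ r ≤ 2 ^ (2 * r / (m + 1) - 1) * (2 * r / (m + 1)) *
        (a ^ (r - (m + 1) / 2) + b ^ (r - (m + 1) / 2)) *
        (a ^ ((m + 1) / 2) - b ^ ((m + 1) / 2)) := by
  have ha : 0 ≤ a := hb.trans hba
  constructor
  · -- (a-b)^r + b^r ≤ ((a-b)+b)^r = a^r
    have h := NNReal.add_rpow_le_rpow_add (⟨a - b, by linarith⟩ : NNReal) (⟨b, hb⟩ : NNReal) hr
    have h' := NNReal.coe_le_coe.2 h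
    replace h' : (a - b) ^ r + b ^ r ≤ (a - b + b) ^ r := h'
    have : a - b + b = a := by ring
    rw [this] at h'
    linarith
  · set s : ℝ := (m + 1) / 2 with hs
    have hs0 : 0 < s := by positivity
    set q : ℝ := r / s with hq
    have hsq : s * q = r := by
      rw [hq]; field_simp
    have hq1 : 1 ≤ q := by
      rw [hq, le_div_iff₀ hs0]; nlinarith
    have hqeq : 2 * r / (m + 1) = q := by
      rw [hq, hs]; rw [div_div_eq_mul_div]; ring_nf
    have hxq : a ^ r = (a ^ s) ^ q := by
      rw [← Real.rpow_mul ha, hsq]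
    have hyq : b ^ r = (b ^ s) ^ q := by
      rw [← Real.rpow_mul hb, hsq]
    have hsq1 : s * (q - 1) = r - s := by rw [mul_sub, hsq]; ring
    have hxq1 : a ^ (r - s) = (a ^ s) ^ (q - 1) := by
      rw [← Real.rpow_mul ha, hsq1]
    have hyq1 : b ^ (r - s) = (b ^ s) ^ (q - 1) := by
      rw [← Real.rpow_mul hb, hsq1]
    set x := a ^ s
    set y := b ^ s
    have hy0 : 0 ≤ y := Real.rpow_nonneg hb s
    have hyx : y ≤ x := Real.rpow_le_rpow hb hba hs0.le
    have key := aux_rpow_sub_le x y q hy0 hyx hq1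
    have hC : 1 ≤ (2:ℝ) ^ (q - 1) :=
      Real.one_le_rpow (by norm_num) (by linarith)
    have hX : 0 ≤ x ^ (q - 1) := Real.rpow_nonneg (hy0.trans hyx) _
    have hY : 0 ≤ y ^ (q - 1) := Real.rpow_nonneg hy0 _
    rw [hqeq, hxq, hyq, hxq1, hyq1]
    have hq0 : 0 < q := lt_of_lt_of_le one_pos hq1
    nlinarith [mul_nonneg (mul_nonneg hq0.le hY) (sub_nonneg.2 hyx),
      mul_nonneg (mul_nonneg hq0.le hX) (sub_nonneg.2 hyx),
      mul_nonneg (mul_nonneg (mul_nonneg hq0.le (add_nonneg hX hY)) (sub_nonneg.2 hyx)) (sub_nonneg.2 hC)]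
end

section
/- (Nash inequality) For every n ≥ 1 there exists a constant C > 0 depending only on n such that for all f : ℝ^n → ℝ with f ∈ L¹(ℝ^n), f ∈ L²(ℝ^n), f differentiable and ∇f ∈ L²(ℝ^n), one has ‖f‖₂^{1+2/n} ≤ C ‖f‖₁^{2/n} ‖∇f‖₂. -/
open MeasureTheory

namespace NashAux
open Metric ENNReal

variable {n : ℕ}
local notation "E" => EuclideanSpace ℝ (Fin n)

lemma lintegral_CS {α : Type*} [MeasurableSpace α] (μ : Measure α) {a b : α → ℝ≥0∞}
    (ha : AEMeasurable a μ) (hb : AEMeasurable b μ) :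
    ∫⁻ x, a x * b x ∂μ ≤ (∫⁻ x, a x ^ (2:ℝ) ∂μ) ^ ((1:ℝ)/2) * (∫⁻ x, b x ^ (2:ℝ) ∂μ) ^ ((1:ℝ)/2) := by
  have hconj : Real.HolderConjugate 2 2 := Real.HolderConjugate.two_two
  simpa using ENNReal.lintegral_mul_le_Lp_mul_Lq μ hconj ha hb

lemma hsq (a : ℝ≥0∞) : a ^ (2:ℝ) = a * a := by
  rw [show (2:ℝ) = ((2:ℕ):ℝ) by norm_num, ENNReal.rpow_natCast, sq]

lemma half_sq (a : ℝ≥0∞) : a ^ ((1:ℝ)/2) * a ^ ((1:ℝ)/2) = a := by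
  rw [← hsq, ← ENNReal.rpow_mul]
  norm_num

lemma pointwise_ftc (f : E → ℝ) (hf : Differentiable ℝ f) (x y : E)
    (hx : ∫⁻ t in Set.Ioc (0:ℝ) 1, (‖fderiv ℝ f (x + t • y)‖₊ : ℝ≥0∞) ^ (2:ℝ) ≠ ∞) :
    (‖f (x + y) - f x‖₊ : ℝ≥0∞) ^ (2:ℝ) ≤
      (‖y‖₊ : ℝ≥0∞) ^ (2:ℝ) *
        ∫⁻ t in Set.Ioc (0:ℝ) 1, (‖fderiv ℝ f (x + t • y)‖₊ : ℝ≥0∞) ^ (2:ℝ) := by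
  classical
  set g : ℝ → ℝ := fun t => (fderiv ℝ f (x + t • y)) y with hg
  have hgm : Measurable g := by
    have h1 : Measurable fun z : E => (fderiv ℝ f z) y := measurable_fderiv_apply_const ℝ f y
    exact h1.comp (measurable_const.add (measurable_id.smul_const y))
  have hd : ∀ t : ℝ, HasDerivAt (fun s => f (x + s • y)) (g t) t := by
    intro t
    have hinner : HasDerivAt (fun s : ℝ => x + s • y) y t := by
      simpa using ((hasDerivAt_id t).smul_const y).const_add x
    exact (hf (x + t • y)).hasFDerivAt.comp_hasDerivAt t hinner
  -- bound on lintegral of ‖g‖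
  have hbd : ∀ t : ℝ, (‖g t‖₊ : ℝ≥0∞) ≤ (‖y‖₊ : ℝ≥0∞) * (‖fderiv ℝ f (x + t • y)‖₊ : ℝ≥0∞) := by
    intro t
    rw [← ENNReal.coe_mul, ENNReal.coe_le_coe, mul_comm]
    exact (fderiv ℝ f (x + t • y)).le_opNNNorm y
  have haux : ∀ a : ℝ≥0∞, a ≤ 1 + a ^ (2:ℝ) := by
    intro a
    rcases le_total a 1 with h | h
    · exact h.trans le_self_add
    · calc a = a ^ (1:ℝ) := (ENNReal.rpow_one a).symm
        _ ≤ a ^ (2:ℝ) := ENNReal.rpow_le_rpow_of_exponent_le h one_le_two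
        _ ≤ 1 + a ^ (2:ℝ) := le_add_self
  have hfin : ∫⁻ t in Set.Ioc (0:ℝ) 1, (‖g t‖₊ : ℝ≥0∞) ≠ ∞ := by
    have : ∫⁻ t in Set.Ioc (0:ℝ) 1, (‖g t‖₊ : ℝ≥0∞)
        ≤ ∫⁻ t in Set.Ioc (0:ℝ) 1,
            (‖y‖₊ : ℝ≥0∞) * (1 + (‖fderiv ℝ f (x + t • y)‖₊ : ℝ≥0∞) ^ (2:ℝ)) := by
      refine lintegral_mono fun t => ?_
      exact (hbd t).trans (mul_le_mul_right (haux _) _)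
    refine ne_top_of_le_ne_top ?_ this
    rw [lintegral_const_mul' _ _ ENNReal.coe_ne_top]
    refine ENNReal.mul_ne_top ENNReal.coe_ne_top ?_
    rw [lintegral_add_left measurable_const]
    refine ENNReal.add_ne_top.2 ⟨?_, hx⟩
    simp [Real.volume_Ioc]
  have hgint : IntervalIntegrable g volume 0 1 := by
    rw [intervalIntegrable_iff_integrableOn_Ioc_of_le zero_le_one]
    refine ⟨hgm.aestronglyMeasurable.restrict, ?_⟩
    exact lt_top_iff_ne_top.2 hfin
  have hftc : ∫ t in (0:ℝ)..1, g t = f (x + y) - f x := by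
    have := intervalIntegral.integral_eq_sub_of_hasDerivAt (fun t _ => hd t) hgint
    simpa using this
  -- now the enorm estimate
  have h1 : (‖f (x + y) - f x‖₊ : ℝ≥0∞) ≤ ∫⁻ t in Set.Ioc (0:ℝ) 1, (‖g t‖₊ : ℝ≥0∞) := by
    rw [← hftc, intervalIntegral.integral_of_le zero_le_one]
    exact enorm_integral_le_lintegral_enorm _
  -- Cauchy–Schwarz on (0,1]
  have h2 : (∫⁻ t in Set.Ioc (0:ℝ) 1, (‖g t‖₊ : ℝ≥0∞)) ^ (2:ℝ)
      ≤ ∫⁻ t in Set.Ioc (0:ℝ) 1, (‖g t‖₊ : ℝ≥0∞) ^ (2:ℝ) := by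
    have hconj : Real.HolderConjugate 2 2 := Real.HolderConjugate.two_two
    have this := ENNReal.lintegral_mul_le_Lp_mul_Lq (volume.restrict (Set.Ioc (0:ℝ) 1)) hconj
       (f := fun t => (‖g t‖₊ : ℝ≥0∞)) (g := fun _ => 1)
       hgm.enorm.aemeasurable aemeasurable_const
    have hone : (∫⁻ _t in Set.Ioc (0:ℝ) 1, (1:ℝ≥0∞) ^ (2:ℝ)) = 1 := by
      simp [Real.volume_Ioc]
    rw [hone, ENNReal.one_rpow, mul_one] at this
    simp only [Pi.mul_apply, mul_one] at this
    calc (∫⁻ t in Set.Ioc (0:ℝ) 1, (‖g t‖₊ : ℝ≥0∞)) ^ (2:ℝ)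
        ≤ ((∫⁻ t in Set.Ioc (0:ℝ) 1, (‖g t‖₊ : ℝ≥0∞) ^ (2:ℝ)) ^ ((1:ℝ)/2)) ^ (2:ℝ) :=
          ENNReal.rpow_le_rpow this (by norm_num)
      _ = ∫⁻ t in Set.Ioc (0:ℝ) 1, (‖g t‖₊ : ℝ≥0∞) ^ (2:ℝ) := by
          rw [← ENNReal.rpow_mul]; norm_num
  calc (‖f (x + y) - f x‖₊ : ℝ≥0∞) ^ (2:ℝ)
      ≤ (∫⁻ t in Set.Ioc (0:ℝ) 1, (‖g t‖₊ : ℝ≥0∞)) ^ (2:ℝ) :=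
        ENNReal.rpow_le_rpow h1 (by norm_num)
    _ ≤ ∫⁻ t in Set.Ioc (0:ℝ) 1, (‖g t‖₊ : ℝ≥0∞) ^ (2:ℝ) := h2
    _ ≤ ∫⁻ t in Set.Ioc (0:ℝ) 1,
          (‖y‖₊ : ℝ≥0∞) ^ (2:ℝ) * (‖fderiv ℝ f (x + t • y)‖₊ : ℝ≥0∞) ^ (2:ℝ) := by
        refine lintegral_mono fun t => ?_
        rw [← ENNReal.mul_rpow_of_nonneg _ _ (by norm_num : (0:ℝ) ≤ 2)]
        exact ENNReal.rpow_le_rpow (hbd t) (by norm_num)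
    _ = (‖y‖₊ : ℝ≥0∞) ^ (2:ℝ) *
          ∫⁻ t in Set.Ioc (0:ℝ) 1, (‖fderiv ℝ f (x + t • y)‖₊ : ℝ≥0∞) ^ (2:ℝ) := by
        rw [lintegral_const_mul' _ _ (by simp : ((‖y‖₊ : ℝ≥0∞) ^ (2:ℝ)) ≠ ∞)]

lemma translation_sq (f : E → ℝ) (hf : Differentiable ℝ f)
    (hG : ∫⁻ x : E, (‖fderiv ℝ f x‖₊ : ℝ≥0∞) ^ (2:ℝ) ≠ ∞) (y : E) :
    ∫⁻ x : E, (‖f (x + y) - f x‖₊ : ℝ≥0∞) ^ (2:ℝ) ≤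
      (‖y‖₊ : ℝ≥0∞) ^ (2:ℝ) * ∫⁻ x : E, (‖fderiv ℝ f x‖₊ : ℝ≥0∞) ^ (2:ℝ) := by
  classical
  set D : E → (E →L[ℝ] ℝ) := fderiv ℝ f with hD
  have hDmeas : Measurable D := measurable_fderiv ℝ f
  -- the function on the product
  have hmap : Measurable fun p : E × ℝ => p.1 + p.2 • y :=
    (measurable_fst.add (measurable_snd.smul_const y))
  have hFmeas : Measurable fun p : E × ℝ => (‖D (p.1 + p.2 • y)‖₊ : ℝ≥0∞) ^ (2:ℝ) :=
    ((hDmeas.comp hmap).enorm).pow_const _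
  set H : E → ℝ≥0∞ :=
    fun x => ∫⁻ t in Set.Ioc (0:ℝ) 1, (‖D (x + t • y)‖₊ : ℝ≥0∞) ^ (2:ℝ) with hH
  have hHmeas : Measurable H := hFmeas.lintegral_prod_right'
  have hswap : ∫⁻ x : E, H x = ∫⁻ x : E, (‖D x‖₊ : ℝ≥0∞) ^ (2:ℝ) := by
    rw [lintegral_lintegral_swap hFmeas.aemeasurable]
    have : ∀ t : ℝ, ∫⁻ x : E, (‖D (x + t • y)‖₊ : ℝ≥0∞) ^ (2:ℝ)
        = ∫⁻ x : E, (‖D x‖₊ : ℝ≥0∞) ^ (2:ℝ) := fun t =>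
      lintegral_add_right_eq_self (fun x => (‖D x‖₊ : ℝ≥0∞) ^ (2:ℝ)) (t • y)
    simp_rw [this]
    rw [lintegral_const]
    simp [Real.volume_Ioc]
  have hae : ∀ᵐ x : E, H x ≠ ∞ := by
    have hfin : ∫⁻ x : E, H x ≠ ∞ := by rw [hswap]; exact hG
    exact (ae_lt_top hHmeas hfin).mono fun x hx => hx.ne
  have hptwise : ∀ᵐ x : E, (‖f (x + y) - f x‖₊ : ℝ≥0∞) ^ (2:ℝ)
      ≤ (‖y‖₊ : ℝ≥0∞) ^ (2:ℝ) * H x :=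
    hae.mono fun x hx => pointwise_ftc f hf x y hx
  calc ∫⁻ x : E, (‖f (x + y) - f x‖₊ : ℝ≥0∞) ^ (2:ℝ)
      ≤ ∫⁻ x : E, (‖y‖₊ : ℝ≥0∞) ^ (2:ℝ) * H x := lintegral_mono_ae hptwise
    _ = (‖y‖₊ : ℝ≥0∞) ^ (2:ℝ) * ∫⁻ x : E, H x :=
        lintegral_const_mul' _ _ (by simp : ((‖y‖₊ : ℝ≥0∞) ^ (2:ℝ)) ≠ ∞)
    _ = (‖y‖₊ : ℝ≥0∞) ^ (2:ℝ) * ∫⁻ x : E, (‖D x‖₊ : ℝ≥0∞) ^ (2:ℝ) := by rw [hswap]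

lemma main_ennreal (hn : 1 ≤ n) (f : E → ℝ) (hint : Integrable f) (hf : Differentiable ℝ f)
    (hG : ∫⁻ x : E, (‖fderiv ℝ f x‖₊ : ℝ≥0∞) ^ (2:ℝ) ≠ ∞)
    {R : ℝ} (hR : 0 < R) :
    ∫⁻ x : E, (‖f x‖₊ : ℝ≥0∞) ^ (2:ℝ) ≤
      (volume (ball (0:E) R))⁻¹ * (∫⁻ x : E, (‖f x‖₊ : ℝ≥0∞)) * (∫⁻ x : E, (‖f x‖₊ : ℝ≥0∞))
      + ENNReal.ofReal R * (∫⁻ x : E, (‖f x‖₊ : ℝ≥0∞) ^ (2:ℝ)) ^ ((1:ℝ)/2)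
          * (∫⁻ x : E, (‖fderiv ℝ f x‖₊ : ℝ≥0∞) ^ (2:ℝ)) ^ ((1:ℝ)/2) := by
  classical
  haveI : Nontrivial (EuclideanSpace ℝ (Fin n)) :=
    Module.nontrivial_of_finrank_pos (R := ℝ)
      (by rw [finrank_euclideanSpace_fin]; exact hn)
  set B := ball (0:E) R with hB
  set V := volume B with hV
  have hV0 : V ≠ 0 := (measure_ball_pos volume (0:E) hR).ne'
  have hVtop : V ≠ ∞ := measure_ball_lt_top.ne
  have hcont : Continuous f := hf.continuous
  set I1 := ∫⁻ x : E, (‖f x‖₊ : ℝ≥0∞) with hI1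
  set I2 := ∫⁻ x : E, (‖f x‖₊ : ℝ≥0∞) ^ (2:ℝ) with hI2
  set G := ∫⁻ x : E, (‖fderiv ℝ f x‖₊ : ℝ≥0∞) ^ (2:ℝ) with hGdef
  have hI1top : I1 ≠ ∞ := hint.2.ne
  -- the averages
  set P : E → ℝ≥0∞ := fun x => ∫⁻ y in B, (‖f (x + y)‖₊ : ℝ≥0∞) with hP
  set Q : E → ℝ≥0∞ := fun x => ∫⁻ y in B, (‖f (x + y) - f x‖₊ : ℝ≥0∞) with hQ
  set S : E → ℝ≥0∞ := fun x => ∫⁻ y in B, (‖f (x + y) - f x‖₊ : ℝ≥0∞) ^ (2:ℝ) with hS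
  have hfm : Measurable f := hcont.measurable
  have hprod1 : Measurable fun p : E × E => (‖f (p.1 + p.2)‖₊ : ℝ≥0∞) :=
    (hfm.comp (measurable_fst.add measurable_snd)).enorm
  have hprod2 : Measurable fun p : E × E => (‖f (p.1 + p.2) - f p.1‖₊ : ℝ≥0∞) :=
    ((hfm.comp (measurable_fst.add measurable_snd)).sub (hfm.comp measurable_fst)).enorm
  have hPm : Measurable P := hprod1.lintegral_prod_right'
  have hQm : Measurable Q := hprod2.lintegral_prod_right'
  have hSm : Measurable S := (hprod2.pow_const _).lintegral_prod_right'
  -- pointwise bound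
  have hpt : ∀ x : E, (‖f x‖₊ : ℝ≥0∞) ≤ V⁻¹ * P x + V⁻¹ * Q x := by
    intro x
    have htr : Integrable (fun y : E => f (x + y)) volume := hint.comp_add_left x
    have hconst : IntegrableOn (fun _ : E => f x) B volume :=
      integrableOn_const hVtop
    have h2 : (∫ y in B, (f x - f (x + y))) = V.toReal * f x - ∫ y in B, f (x + y) := by
      rw [integral_sub hconst htr.integrableOn, setIntegral_const, smul_eq_mul, measureReal_def]
    have hsum : (∫ y in B, f (x + y)) + (∫ y in B, (f x - f (x + y))) = V.toReal * f x := by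
      rw [h2]; ring
    have hVmul : V * (‖f x‖₊ : ℝ≥0∞) = (‖V.toReal * f x‖₊ : ℝ≥0∞) := by
      rw [nnnorm_mul, ENNReal.coe_mul]
      congr 1
      rw [← enorm_eq_nnnorm, Real.enorm_eq_ofReal ENNReal.toReal_nonneg, ENNReal.ofReal_toReal hVtop]
    calc (‖f x‖₊ : ℝ≥0∞) = V⁻¹ * (V * (‖f x‖₊ : ℝ≥0∞)) := by
          rw [← mul_assoc, ENNReal.inv_mul_cancel hV0 hVtop, one_mul]
      _ = V⁻¹ * (‖(∫ y in B, f (x + y)) + (∫ y in B, (f x - f (x + y)))‖₊ : ℝ≥0∞) := by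
          rw [hVmul, hsum]
      _ ≤ V⁻¹ * ((‖∫ y in B, f (x + y)‖₊ : ℝ≥0∞) + (‖∫ y in B, (f x - f (x + y))‖₊ : ℝ≥0∞)) := by
          gcongr
          exact_mod_cast nnnorm_add_le _ _
      _ ≤ V⁻¹ * (P x + Q x) := by
          gcongr
          · exact enorm_integral_le_lintegral_enorm _
          · refine (enorm_integral_le_lintegral_enorm _).trans ?_
            refine lintegral_mono fun y => ?_
            simp only [enorm_eq_nnnorm, ← nnnorm_neg (f x - f (x + y)), neg_sub]
            exact le_rfl
      _ = V⁻¹ * P x + V⁻¹ * Q x := mul_add _ _ _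
  -- P is bounded by I1
  have key1 : ∀ x : E, P x ≤ I1 := by
    intro x
    refine (setLIntegral_le_lintegral _ _).trans ?_
    exact le_of_eq (lintegral_add_left_eq_self (fun z : E => (‖f z‖₊ : ℝ≥0∞)) x)
  -- split I2
  have hsplit : I2 ≤ (∫⁻ x : E, (‖f x‖₊ : ℝ≥0∞) * (V⁻¹ * P x))
      + ∫⁻ x : E, (‖f x‖₊ : ℝ≥0∞) * (V⁻¹ * Q x) := by
    rw [← lintegral_add_left (f := fun x : E => (‖f x‖₊ : ℝ≥0∞) * (V⁻¹ * P x)) (hfm.nnnorm.coe_nnreal_ennreal.mul (hPm.const_mul _))]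
    rw [hI2]
    refine lintegral_mono fun x => ?_
    rw [hsq, ← mul_add]
    exact mul_le_mul_right (hpt x) _
  -- term 1
  have hterm1 : ∫⁻ x : E, (‖f x‖₊ : ℝ≥0∞) * (V⁻¹ * P x) ≤ V⁻¹ * I1 * I1 := by
    have hne : V⁻¹ * I1 ≠ ∞ := ENNReal.mul_ne_top (ENNReal.inv_ne_top.2 hV0) hI1top
    calc ∫⁻ x : E, (‖f x‖₊ : ℝ≥0∞) * (V⁻¹ * P x)
        ≤ ∫⁻ x : E, (‖f x‖₊ : ℝ≥0∞) * (V⁻¹ * I1) := by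
          refine lintegral_mono fun x => ?_
          exact mul_le_mul_right (mul_le_mul_right (key1 x) _) _
      _ = I1 * (V⁻¹ * I1) := lintegral_mul_const' _ _ hne
      _ = V⁻¹ * I1 * I1 := by ring
  -- Cauchy-Schwarz bound for Q
  have hQbound : ∀ x : E, (V⁻¹ * Q x) ^ (2:ℝ) ≤ V⁻¹ * S x := by
    intro x
    have hcs := lintegral_CS (volume.restrict B)
      (a := fun y => (‖f (x + y) - f x‖₊ : ℝ≥0∞)) (b := fun _ => 1)
      ((hfm.comp (measurable_const.add measurable_id)).sub measurable_const).enorm.aemeasurable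
      aemeasurable_const
    have hone : (∫⁻ _y in B, (1:ℝ≥0∞) ^ (2:ℝ)) = V := by
      simp [Measure.restrict_apply_univ, hV]
    rw [hone] at hcs
    simp only [mul_one] at hcs
    have hq : Q x ≤ (S x) ^ ((1:ℝ)/2) * V ^ ((1:ℝ)/2) := hcs
    calc (V⁻¹ * Q x) ^ (2:ℝ) = (V⁻¹ * Q x) * (V⁻¹ * Q x) := hsq _
      _ ≤ (V⁻¹ * ((S x) ^ ((1:ℝ)/2) * V ^ ((1:ℝ)/2)))
            * (V⁻¹ * ((S x) ^ ((1:ℝ)/2) * V ^ ((1:ℝ)/2))) := by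
          gcongr <;> exact hq
      _ = (V⁻¹ * (V ^ ((1:ℝ)/2) * V ^ ((1:ℝ)/2)))
            * (V⁻¹ * ((S x) ^ ((1:ℝ)/2) * (S x) ^ ((1:ℝ)/2))) := by ring
      _ = (V⁻¹ * V) * (V⁻¹ * S x) := by rw [half_sq, half_sq]
      _ = V⁻¹ * S x := by rw [ENNReal.inv_mul_cancel hV0 hVtop, one_mul]
  -- the integral of S
  have hSint : ∫⁻ x : E, S x ≤ V * ((ENNReal.ofReal R) ^ (2:ℝ) * G) := by
    have hswap : ∫⁻ x : E, S x
        = ∫⁻ y in B, (∫⁻ x : E, (‖f (x + y) - f x‖₊ : ℝ≥0∞) ^ (2:ℝ)) := by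
      exact lintegral_lintegral_swap ((hprod2.pow_const _).aemeasurable)
    rw [hswap]
    calc ∫⁻ y in B, (∫⁻ x : E, (‖f (x + y) - f x‖₊ : ℝ≥0∞) ^ (2:ℝ))
        ≤ ∫⁻ _y in B, (ENNReal.ofReal R) ^ (2:ℝ) * G := by
          refine lintegral_mono_ae ?_
          rw [ae_restrict_iff' measurableSet_ball]
          refine Filter.Eventually.of_forall fun y hy => ?_
          refine (translation_sq f hf hG y).trans ?_
          rw [← hGdef]
          gcongr
          rw [← enorm_eq_nnnorm, ← ofReal_norm]
          exact ENNReal.ofReal_le_ofReal (le_of_lt (mem_ball_zero_iff.1 hy))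
      _ = V * ((ENNReal.ofReal R) ^ (2:ℝ) * G) := by
          rw [lintegral_const, Measure.restrict_apply_univ, mul_comm]
  -- term 2
  have hterm2 : ∫⁻ x : E, (‖f x‖₊ : ℝ≥0∞) * (V⁻¹ * Q x)
      ≤ ENNReal.ofReal R * I2 ^ ((1:ℝ)/2) * G ^ ((1:ℝ)/2) := by
    have hJ : ∫⁻ x : E, (V⁻¹ * Q x) ^ (2:ℝ) ≤ (ENNReal.ofReal R) ^ (2:ℝ) * G := by
      calc ∫⁻ x : E, (V⁻¹ * Q x) ^ (2:ℝ) ≤ ∫⁻ x : E, V⁻¹ * S x := lintegral_mono hQbound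
        _ = V⁻¹ * ∫⁻ x : E, S x :=
            lintegral_const_mul' _ _ (ENNReal.inv_ne_top.2 hV0)
        _ ≤ V⁻¹ * (V * ((ENNReal.ofReal R) ^ (2:ℝ) * G)) := mul_le_mul_right hSint _
        _ = (ENNReal.ofReal R) ^ (2:ℝ) * G := by
            rw [← mul_assoc, ENNReal.inv_mul_cancel hV0 hVtop, one_mul]
    calc ∫⁻ x : E, (‖f x‖₊ : ℝ≥0∞) * (V⁻¹ * Q x)
        ≤ (∫⁻ x : E, (‖f x‖₊ : ℝ≥0∞) ^ (2:ℝ)) ^ ((1:ℝ)/2)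
            * (∫⁻ x : E, (V⁻¹ * Q x) ^ (2:ℝ)) ^ ((1:ℝ)/2) :=
          lintegral_CS volume hfm.enorm.aemeasurable (hQm.const_mul _).aemeasurable
      _ ≤ I2 ^ ((1:ℝ)/2) * ((ENNReal.ofReal R) ^ (2:ℝ) * G) ^ ((1:ℝ)/2) := by
          rw [← hI2]
          exact mul_le_mul_right (ENNReal.rpow_le_rpow hJ (by norm_num)) _
      _ = ENNReal.ofReal R * I2 ^ ((1:ℝ)/2) * G ^ ((1:ℝ)/2) := by
          rw [ENNReal.mul_rpow_of_nonneg _ _ (by norm_num : (0:ℝ) ≤ 1/2),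
            ← ENNReal.rpow_mul]
          norm_num
          ring
  calc I2 ≤ _ := hsplit
    _ ≤ V⁻¹ * I1 * I1 + ENNReal.ofReal R * I2 ^ ((1:ℝ)/2) * G ^ ((1:ℝ)/2) :=
        add_le_add hterm1 hterm2

lemma optimize {n : ℕ} (hn : 1 ≤ n) {ω A B G : ℝ} (hω : 0 < ω) (hA : 0 ≤ A) (hB : 0 ≤ B)
    (hG : 0 ≤ G)
    (h : ∀ R : ℝ, 0 < R → A ^ 2 ≤ (ω * R ^ n)⁻¹ * B ^ 2 + R * A * G) :
    A ^ ((1:ℝ) + 2 / (n:ℝ)) ≤ ((2:ℝ) ^ (n+1) * ω⁻¹) ^ ((1:ℝ)/n) * B ^ ((2:ℝ)/n) * G := by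
  have hn' : (0:ℝ) < n := by exact_mod_cast hn
  rcases hA.eq_or_lt with hA0 | hA0
  · rw [← hA0, Real.zero_rpow (by positivity)]
    positivity
  -- B > 0
  have hB0 : 0 < B := by
    rcases hB.eq_or_lt with hB0 | hB0
    · exfalso
      rcases hG.eq_or_lt with hG0 | hG0
      · have := h 1 one_pos
        rw [← hB0, ← hG0] at this
        simp at this
        nlinarith
      · have := h (A / (2 * G)) (by positivity)
        rw [← hB0] at this
        have hh : A / (2 * G) * A * G = A ^ 2 / 2 := by field_simp
        rw [hh] at this
        simp at this
        nlinarith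
    · exact hB0
  -- G > 0
  have hG0 : 0 < G := by
    rcases hG.eq_or_lt with hG0 | hG0
    · exfalso
      set R := max 1 (2 * B ^ 2 / (ω * A ^ 2)) with hRdef
      have hR1 : (1:ℝ) ≤ R := le_max_left _ _
      have hRpos : 0 < R := lt_of_lt_of_le one_pos hR1
      have hRn : R ≤ R ^ n := le_self_pow₀ hR1 (by omega)
      have h2 : ω * R ≤ ω * R ^ n := by nlinarith
      have h3 : 2 * B ^ 2 / (ω * A ^ 2) ≤ R := le_max_right _ _
      rw [div_le_iff₀ (by positivity)] at h3
      have h5 := h R hRpos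
      rw [← hG0] at h5
      have hpow : 0 < ω * R ^ n := by positivity
      have h6 : B ^ 2 ≤ (ω * R ^ n) * (A ^ 2 / 2) := by nlinarith
      have h7 : (ω * R ^ n)⁻¹ * B ^ 2 ≤ A ^ 2 / 2 := by
        rw [inv_mul_le_iff₀ hpow]
        linarith
      nlinarith
    · exact hG0
  -- main case
  set L := A * G with hL
  set c := B ^ 2 / ω with hc
  have hLpos : 0 < L := by positivity
  have hcpos : 0 < c := by positivity
  set R := (c / L) ^ ((1:ℝ) / (n + 1)) with hRdef
  have hRpos : 0 < R := Real.rpow_pos_of_pos (by positivity) _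
  have hRpow : R ^ (n + 1) = c / L := by
    rw [hRdef, ← Real.rpow_natCast ((c / L) ^ ((1:ℝ) / (n+1))) (n+1),
      ← Real.rpow_mul (by positivity)]
    push_cast
    rw [one_div, inv_mul_cancel₀ (by positivity : (0:ℝ) < (n:ℝ)+1).ne', Real.rpow_one]
  have hkey0 : A ^ 2 ≤ 2 * (R * L) := by
    have h5 := h R hRpos
    have heq : (ω * R ^ n)⁻¹ * B ^ 2 = R * L := by
      have hRn1 : R * R ^ n = c / L := by rw [← hRpow]; ring
      have hstep : (ω * R ^ n)⁻¹ * B ^ 2 = c / R ^ n := by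
        rw [hc]
        field_simp
      rw [hstep, eq_comm, _root_.eq_div_iff (by positivity : (0:ℝ) < R ^ n).ne']
      calc R * L * R ^ n = (R * R ^ n) * L := by ring
        _ = (c / L) * L := by rw [hRn1]
        _ = c := by field_simp
    rw [heq] at h5
    calc A ^ 2 ≤ R * L + R * A * G := h5
      _ = 2 * (R * L) := by rw [hL]; ring
  have hkey1 : (A ^ 2) ^ (n + 1) ≤ 2 ^ (n+1) * c * L ^ n := by
    calc (A ^ 2) ^ (n+1) ≤ (2 * (R * L)) ^ (n+1) := by
          exact pow_le_pow_left₀ (by positivity) hkey0 _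
      _ = 2 ^ (n+1) * (R ^ (n+1) * L ^ (n+1)) := by rw [mul_pow, mul_pow]
      _ = 2 ^ (n+1) * ((c / L) * L ^ (n+1)) := by rw [hRpow]
      _ = 2 ^ (n+1) * c * L ^ n := by
          field_simp
          ring
  have hkey : A ^ (n + 2) ≤ 2 ^ (n+1) * ω⁻¹ * B ^ 2 * G ^ n := by
    have hexp : (A ^ 2) ^ (n+1) = A ^ (n+2) * A ^ n := by
      rw [← pow_mul, ← pow_add]
      congr 1
      ring
    have hrhs : 2 ^ (n+1) * c * L ^ n = (2 ^ (n+1) * ω⁻¹ * B ^ 2 * G ^ n) * A ^ n := by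
      rw [hc, hL, mul_pow]
      field_simp
      try ring
    rw [hexp, hrhs] at hkey1
    exact le_of_mul_le_mul_right hkey1 (by positivity)
  -- take rpow 1/n
  have hfin := Real.rpow_le_rpow (by positivity) hkey (by positivity : (0:ℝ) ≤ 1/n)
  calc A ^ ((1:ℝ) + 2 / (n:ℝ)) = (A ^ (n+2) : ℝ) ^ ((1:ℝ)/n) := by
        rw [← Real.rpow_natCast A (n+2), ← Real.rpow_mul hA]
        congr 1
        push_cast
        field_simp
        try ring
    _ ≤ (2 ^ (n+1) * ω⁻¹ * B ^ 2 * G ^ n : ℝ) ^ ((1:ℝ)/n) := hfin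
    _ = ((2:ℝ) ^ (n+1) * ω⁻¹) ^ ((1:ℝ)/n) * B ^ ((2:ℝ)/n) * G := by
        rw [Real.mul_rpow (by positivity) (by positivity),
          Real.mul_rpow (by positivity) (by positivity)]
        congr 1
        · rw [← Real.rpow_natCast B 2, ← Real.rpow_mul hB]
          congr 1
          push_cast
          ring
        · rw [← Real.rpow_natCast G n, ← Real.rpow_mul hG]
          rw [show (n:ℝ) * (1/n) = 1 by field_simp]
          exact Real.rpow_one _

end NashAux

open Metric ENNReal NashAux in
/-- **Nash inequality.** For every `n ≥ 1` there is a constant `C > 0`, depending only on `n`,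
such that for every `f ∈ L¹(ℝⁿ) ∩ L²(ℝⁿ)` which is differentiable with `∇f ∈ L²(ℝⁿ)`, one has
`‖f‖₂^(1+2/n) ≤ C * ‖f‖₁^(2/n) * ‖∇f‖₂`. -/
theorem nash_inequality (n : ℕ) (hn : 1 ≤ n) :
    ∃ C > 0, ∀ f : EuclideanSpace ℝ (Fin n) → ℝ,
      Integrable f → MemLp f 2 → Differentiable ℝ f →
      MemLp (fun x => ‖fderiv ℝ f x‖) 2 →
      (eLpNorm f 2 volume).toReal ^ (1 + 2 / (n : ℝ)) ≤
        C * (eLpNorm f 1 volume).toReal ^ (2 / (n : ℝ)) *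
          (eLpNorm (fun x => ‖fderiv ℝ f x‖) 2 volume).toReal := by
  haveI : Nontrivial (EuclideanSpace ℝ (Fin n)) :=
    Module.nontrivial_of_finrank_pos (R := ℝ)
      (by rw [finrank_euclideanSpace_fin]; exact hn)
  set ω : ℝ := (volume (ball (0:EuclideanSpace ℝ (Fin n)) 1)).toReal with hωdef
  have hω : 0 < ω := ENNReal.toReal_pos (measure_ball_pos volume _ one_pos).ne'
    measure_ball_lt_top.ne
  refine ⟨((2:ℝ) ^ (n+1) * ω⁻¹) ^ ((1:ℝ)/n), by positivity, ?_⟩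
  intro f hint hf2 hdiff hDmem
  set I1 := ∫⁻ x : EuclideanSpace ℝ (Fin n), (‖f x‖₊ : ℝ≥0∞) with hI1def
  set I2 := ∫⁻ x : EuclideanSpace ℝ (Fin n), (‖f x‖₊ : ℝ≥0∞) ^ (2:ℝ) with hI2def
  set G2 := ∫⁻ x : EuclideanSpace ℝ (Fin n), (‖fderiv ℝ f x‖₊ : ℝ≥0∞) ^ (2:ℝ) with hG2def
  have e1 : eLpNorm f 1 volume = I1 := eLpNorm_one_eq_lintegral_enorm
  have e2 : eLpNorm f 2 volume = I2 ^ ((1:ℝ)/2) := by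
    rw [eLpNorm_eq_lintegral_rpow_enorm_toReal two_ne_zero ENNReal.ofNat_ne_top]
    norm_num [hI2def, enorm_eq_nnnorm]
  have eG : eLpNorm (fun x => ‖fderiv ℝ f x‖) 2 volume = G2 ^ ((1:ℝ)/2) := by
    rw [eLpNorm_eq_lintegral_rpow_enorm_toReal two_ne_zero ENNReal.ofNat_ne_top]
    norm_num [hG2def, nnnorm_norm, enorm_eq_nnnorm]
  have hI1top : I1 ≠ ∞ := hint.2.ne
  have hI2top : I2 ≠ ∞ := by
    intro hcon
    have := hf2.2
    rw [e2, hcon, ENNReal.top_rpow_of_pos (by norm_num)] at this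
    exact (lt_irrefl _ this).elim
  have hG2top : G2 ≠ ∞ := by
    intro hcon
    have := hDmem.2
    rw [eG, hcon, ENNReal.top_rpow_of_pos (by norm_num)] at this
    exact (lt_irrefl _ this).elim
  set A := (eLpNorm f 2 volume).toReal with hAdef
  set B := (eLpNorm f 1 volume).toReal with hBdef
  set Gr := (eLpNorm (fun x => ‖fderiv ℝ f x‖) 2 volume).toReal with hGrdef
  have hI2A : I2.toReal = A ^ 2 := by
    rw [hAdef, e2, sq, ← ENNReal.toReal_mul, half_sq]
  have key : ∀ R : ℝ, 0 < R → A ^ 2 ≤ (ω * R ^ n)⁻¹ * B ^ 2 + R * A * Gr := by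
    intro R hR
    have main := main_ennreal hn f hint hdiff hG2top hR
    rw [← hI1def, ← hI2def, ← hG2def] at main
    set V := volume (ball (0:EuclideanSpace ℝ (Fin n)) R) with hVdef
    have hV0 : V ≠ 0 := (measure_ball_pos volume _ hR).ne'
    have hVtop : V ≠ ∞ := measure_ball_lt_top.ne
    have hT1top : V⁻¹ * I1 * I1 ≠ ∞ :=
      ENNReal.mul_ne_top (ENNReal.mul_ne_top (ENNReal.inv_ne_top.2 hV0) hI1top) hI1top
    have hT2top : ENNReal.ofReal R * I2 ^ ((1:ℝ)/2) * G2 ^ ((1:ℝ)/2) ≠ ∞ := by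
      refine ENNReal.mul_ne_top (ENNReal.mul_ne_top ENNReal.ofReal_ne_top ?_) ?_
      · exact (ENNReal.rpow_lt_top_of_nonneg (by norm_num) hI2top).ne
      · exact (ENNReal.rpow_lt_top_of_nonneg (by norm_num) hG2top).ne
    have hreal := ENNReal.toReal_le_toReal hI2top
      (by exact ENNReal.add_ne_top.2 ⟨hT1top, hT2top⟩) |>.2 main
    rw [ENNReal.toReal_add hT1top hT2top, ENNReal.toReal_mul, ENNReal.toReal_mul,
      ENNReal.toReal_mul, ENNReal.toReal_mul, ENNReal.toReal_inv,
      ENNReal.toReal_ofReal hR.le] at hreal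
    have hVreal : V.toReal = ω * R ^ n := by
      rw [hVdef, Measure.addHaar_ball _ _ hR.le, finrank_euclideanSpace_fin,
        ENNReal.toReal_mul, ENNReal.toReal_ofReal (by positivity), ← hωdef]
      ring
    rw [hI2A, hVreal] at hreal
    calc A ^ 2 ≤ (ω * R ^ n)⁻¹ * I1.toReal * I1.toReal
          + R * (I2 ^ ((1:ℝ)/2)).toReal * (G2 ^ ((1:ℝ)/2)).toReal := hreal
      _ = (ω * R ^ n)⁻¹ * B ^ 2 + R * A * Gr := by
          rw [hBdef, hAdef, hGrdef, e1, e2, eG]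
          ring
  have := optimize hn hω (ENNReal.toReal_nonneg : 0 ≤ A) (ENNReal.toReal_nonneg : 0 ≤ B)
    (ENNReal.toReal_nonneg : 0 ≤ Gr) key
  calc A ^ (1 + 2 / (n:ℝ)) ≤ ((2:ℝ) ^ (n+1) * ω⁻¹) ^ ((1:ℝ)/n) * B ^ ((2:ℝ)/n) * Gr := this
    _ = ((2:ℝ) ^ (n+1) * ω⁻¹) ^ ((1:ℝ)/n) * B ^ (2 / (n:ℝ)) * Gr := by norm_num
end

section
/- (Cut-off function, gradient estimate) Let n ≥ 1 and R > 0, and define η(x) = exp(1 - R/(2R - |x|)) for x ∈ ℝ^n with R < |x| < 2R. Then there exists a constant C > 0 depending only on n such that for all x with R < |x| < 2R and all 0 < a < 1, ‖∇η(x)‖ ≤ (C/(a² R)) · η(x)^{1-a}. -/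
private lemma cutoff_key (a t : ℝ) (ha0 : 0 < a) (ha1 : a ≤ 1) (ht : 1 ≤ t) :
    a ^ 2 * t ^ 2 ≤ 4 * Real.exp (a * (t - 1)) := by
  set s := a * (t - 1) with hs_def
  have hs : 0 ≤ s := mul_nonneg ha0.le (by linarith)
  have h1 : (1 + s / 2) ^ 2 ≤ Real.exp s := by
    have h := Real.add_one_le_exp (s / 2)
    have hpos : (0 : ℝ) ≤ 1 + s / 2 := by linarith
    calc (1 + s / 2) ^ 2 ≤ Real.exp (s / 2) ^ 2 := by nlinarith [Real.exp_pos (s / 2)]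
      _ = Real.exp s := by rw [sq, ← Real.exp_add]; ring_nf
  have h2 : a * t ≤ 2 * (1 + s / 2) := by
    have : a * t = s + a := by rw [hs_def]; ring
    linarith
  have h3 : 0 ≤ a * t := mul_nonneg ha0.le (by linarith)
  nlinarith [sq_nonneg (1 + s / 2)]

/-- **Cut-off function, gradient estimate.** Let `n ≥ 1` and `R > 0`, and let
`η(x) = exp(1 - R/(2R - ‖x‖))` on the annulus `R < ‖x‖ < 2R` in `ℝⁿ`. There exists a
constant `C > 0` depending only on `n` such that for all `x` in the annulus and all
`0 < a < 1`, `‖∇η(x)‖ ≤ C/(a²R) * η(x)^(1-a)`. -/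
theorem cutoff_gradient_estimate (n : ℕ) (hn : 1 ≤ n) :
    ∃ C > 0, ∀ R : ℝ, 0 < R → ∀ x : EuclideanSpace ℝ (Fin n),
      R < ‖x‖ → ‖x‖ < 2 * R → ∀ a : ℝ, 0 < a → a < 1 →
      ‖fderiv ℝ (fun y : EuclideanSpace ℝ (Fin n) =>
          Real.exp (1 - R / (2 * R - ‖y‖))) x‖ ≤
        C / (a ^ 2 * R) * Real.exp (1 - R / (2 * R - ‖x‖)) ^ (1 - a) := by
  refine ⟨4, by norm_num, fun R hR x hx1 hx2 a ha0 ha1 => ?_⟩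
  have hxne : x ≠ 0 := by
    intro h; rw [h, norm_zero] at hx1; linarith
  have hd : 0 < 2 * R - ‖x‖ := by linarith
  have hdR : 2 * R - ‖x‖ < R := by linarith
  set d := 2 * R - ‖x‖ with hd_def
  -- derivative of the norm
  have hN : DifferentiableAt ℝ (fun y : EuclideanSpace ℝ (Fin n) => ‖y‖) x :=
    (contDiffAt_norm (𝕜 := ℝ) (n := 1) hxne).differentiableAt one_ne_zero
  set N := fderiv ℝ (fun y : EuclideanSpace ℝ (Fin n) => ‖y‖) x with hNdef
  have hNnorm : ‖N‖ ≤ 1 := by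
    simpa using norm_fderiv_le_of_lipschitz ℝ lipschitzWith_one_norm (x₀ := x)
  -- one-dimensional chain
  have h1 : HasDerivAt (fun r : ℝ => 2 * R - r) (-1) ‖x‖ := by
    simpa using (hasDerivAt_id ‖x‖).const_sub (2 * R)
  have h2 : HasDerivAt (fun r : ℝ => (2 * R - r)⁻¹) (- -1 / (2 * R - ‖x‖) ^ 2) ‖x‖ :=
    h1.inv (ne_of_gt hd)
  have h4 : HasDerivAt (fun r : ℝ => 1 - R / (2 * R - r)) (-(R / d ^ 2)) ‖x‖ := by
    have h3 := (HasDerivAt.const_mul R h2).const_sub 1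
    have heq : (fun r : ℝ => 1 - R * (2 * R - r)⁻¹) = fun r : ℝ => 1 - R / (2 * R - r) := by
      funext r; rw [div_eq_mul_inv]
    rw [heq] at h3
    refine h3.congr_deriv ?_
    rw [hd_def]; ring
  have h5 : HasDerivAt (fun r : ℝ => Real.exp (1 - R / (2 * R - r)))
      (Real.exp (1 - R / (2 * R - ‖x‖)) * -(R / d ^ 2)) ‖x‖ := h4.exp
  have h6 : HasFDerivAt (fun y : EuclideanSpace ℝ (Fin n) =>
      Real.exp (1 - R / (2 * R - ‖y‖)))
      ((Real.exp (1 - R / (2 * R - ‖x‖)) * -(R / d ^ 2)) • N) x :=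
    h5.comp_hasFDerivAt x hN.hasFDerivAt
  rw [h6.fderiv]
  set E := Real.exp (1 - R / (2 * R - ‖x‖)) with hE_def
  have hEpos : 0 < E := Real.exp_pos _
  have hnorm_le : ‖(E * -(R / d ^ 2)) • N‖ ≤ E * (R / d ^ 2) := by
    rw [norm_smul]
    have : ‖E * -(R / d ^ 2)‖ = E * (R / d ^ 2) := by
      rw [Real.norm_eq_abs, abs_mul, abs_neg, abs_of_pos hEpos,
        abs_of_pos (div_pos hR (pow_pos hd 2))]
    rw [this]
    exact mul_le_of_le_one_right (by positivity) hNnorm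
  refine hnorm_le.trans ?_
  -- the analytic inequality
  set t := R / d with ht_def
  have ht1 : 1 < t := (one_lt_div hd).2 hdR
  have hE_eq : E = Real.exp (1 - t) := by
    rw [hE_def, ht_def]
  have hrpow : E ^ (1 - a) = Real.exp ((1 - t) * (1 - a)) := by
    rw [hE_eq, ← Real.exp_mul]
  have hRd2 : R / d ^ 2 = t ^ 2 / R := by
    rw [ht_def]; field_simp
  rw [hrpow, hE_eq, hRd2]
  have hkey : a ^ 2 * t ^ 2 ≤ 4 * Real.exp (a * (t - 1)) :=
    cutoff_key a t ha0 ha1.le ht1.le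
  have hsplit : Real.exp ((1 - t) * (1 - a)) = Real.exp (1 - t) * Real.exp (a * (t - 1)) := by
    rw [← Real.exp_add]; ring_nf
  rw [hsplit]
  have hexp1 : 0 < Real.exp (1 - t) := Real.exp_pos _
  have hexp2 : 0 < Real.exp (a * (t - 1)) := Real.exp_pos _
  have hgoal2 : Real.exp (1 - t) * (t ^ 2 / R) = Real.exp (1 - t) * t ^ 2 / R :=
    (mul_div_assoc _ _ _).symm
  rw [hgoal2, div_mul_eq_mul_div, div_le_div_iff₀ hR (by positivity)]
  nlinarith [mul_le_mul_of_nonneg_right (mul_le_mul_of_nonneg_left hkey hexp1.le) hR.le]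
end

section
/- (Cut-off function, Laplacian estimate) Let n ≥ 1 and R > 0, and define η(x) = exp(1 - R/(2R - |x|)) for x ∈ ℝ^n with R < |x| < 2R. Then there exists a constant C > 0 depending only on n such that for all x with R < |x| < 2R and all 0 < a < 1, |Δη(x)| ≤ (C/(a⁴ R²)) · η(x)^{1-a}. -/
open Real

private lemma cle_hasDerivAt_G {R s : ℝ} (hs : 0 < s) (hs2 : Real.sqrt s < 2*R) :
    HasDerivAt (fun s => Real.exp (1 - R / (2*R - Real.sqrt s)))
      (-(R / (2 * Real.sqrt s * (2*R - Real.sqrt s)^2)) *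
        Real.exp (1 - R / (2*R - Real.sqrt s))) s := by
  have hrs : 0 < Real.sqrt s := Real.sqrt_pos.2 hs
  have hP : 0 < 2*R - Real.sqrt s := by linarith
  have h1 : HasDerivAt Real.sqrt (1/(2*Real.sqrt s)) s := Real.hasDerivAt_sqrt hs.ne'
  have h2 : HasDerivAt (fun s => 2*R - Real.sqrt s) (0 - 1/(2*Real.sqrt s)) s :=
    (hasDerivAt_const s (2*R)).sub h1
  have h3 := (hasDerivAt_const s R).div h2 hP.ne'
  have h4 := (hasDerivAt_const s (1:ℝ)).sub h3
  have h5 := h4.exp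
  refine h5.congr_deriv ?_
  simp only [Pi.sub_apply, Pi.div_apply]
  field_simp
  ring

private lemma cle_hasDerivAt_G1 {R s : ℝ} (hs : 0 < s) (hs2 : Real.sqrt s < 2*R) :
    HasDerivAt (fun s => -(R / (2 * Real.sqrt s * (2*R - Real.sqrt s)^2)) *
        Real.exp (1 - R / (2*R - Real.sqrt s)))
      ((R*((2*R-Real.sqrt s) - 2*Real.sqrt s)/(4*(Real.sqrt s)^3*(2*R-Real.sqrt s)^3)
          + R^2/(4*(Real.sqrt s)^2*(2*R-Real.sqrt s)^4)) *
        Real.exp (1 - R / (2*R - Real.sqrt s))) s := by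
  have hrs : 0 < Real.sqrt s := Real.sqrt_pos.2 hs
  have hP : 0 < 2*R - Real.sqrt s := by linarith
  have h1 : HasDerivAt Real.sqrt (1/(2*Real.sqrt s)) s := Real.hasDerivAt_sqrt hs.ne'
  have h2 : HasDerivAt (fun s => 2*R - Real.sqrt s) (0 - 1/(2*Real.sqrt s)) s :=
    (hasDerivAt_const s (2*R)).sub h1
  have hA : HasDerivAt (fun s => 2*Real.sqrt s) (2*(1/(2*Real.sqrt s))) s := h1.const_mul 2
  have hB := h2.pow 2
  have hD := hA.mul hB
  have hD0 : 2*Real.sqrt s*(2*R-Real.sqrt s)^2 ≠ 0 := by positivity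
  have hW := ((hasDerivAt_const s R).div hD hD0).neg
  have := hW.mul (cle_hasDerivAt_G hs hs2)
  refine this.congr_deriv ?_
  simp only [Pi.mul_apply, Pi.div_apply, Pi.neg_apply, Pi.pow_apply]
  generalize Real.sqrt s = q at hrs hP ⊢
  field_simp
  ring

private lemma cle_sum {n : ℕ} (x : EuclideanSpace ℝ (Fin n)) (A B : ℝ) :
    ∑ i : Fin n, (A * 2 + B * (2 * x i) * (2 * x i))
      = 2*n*A + 4*(∑ i : Fin n, (x i)^2)*B := by
  rw [Finset.sum_add_distrib, Finset.sum_const, Finset.card_univ, Fintype.card_fin]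
  rw [Finset.sum_congr rfl (fun i _ => show B*(2*x i)*(2*x i) = (x i)^2*(4*B) from by ring),
    ← Finset.sum_mul]
  simp only [nsmul_eq_mul]
  ring

private lemma cle_pow4 {t : ℝ} (ht : 0 ≤ t) : t^4 ≤ 256 * Real.exp t := by
  have h1 : t/4 ≤ Real.exp (t/4) := by nlinarith [Real.add_one_le_exp (t/4)]
  have h2 : (t/4)^4 ≤ Real.exp (t/4)^4 := pow_le_pow_left₀ (by positivity) h1 4
  have h3 : Real.exp (t/4)^4 = Real.exp t := by
    rw [← Real.exp_nat_mul]; congr 1; push_cast; ring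
  nlinarith [h2, h3]

set_option maxHeartbeats 2000000 in
/-- **Cut-off function, Laplacian estimate.** Let `n ≥ 1` and `R > 0`, and let
`η(x) = exp(1 - R/(2R - ‖x‖))` on the annulus `R < ‖x‖ < 2R` in `ℝⁿ`. There exists a
constant `C > 0` depending only on `n` such that for all `x` in the annulus and all
`0 < a < 1`, `|Δη(x)| ≤ C/(a⁴R²) * η(x)^(1-a)`, where the Laplacian is the trace of the
second derivative, written as the sum of the repeated second directional derivatives
along the standard basis vectors. -/
theorem cutoff_laplacian_estimate (n : ℕ) (hn : 1 ≤ n) :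
    ∃ C > 0, ∀ R : ℝ, 0 < R → ∀ x : EuclideanSpace ℝ (Fin n),
      R < ‖x‖ → ‖x‖ < 2 * R → ∀ a : ℝ, 0 < a → a < 1 →
      |∑ i : Fin n,
          fderiv ℝ (fun y : EuclideanSpace ℝ (Fin n) =>
              fderiv ℝ (fun z : EuclideanSpace ℝ (Fin n) =>
                  Real.exp (1 - R / (2 * R - ‖z‖))) y (EuclideanSpace.single i 1))
            x (EuclideanSpace.single i 1)| ≤
        C / (a ^ 4 * R ^ 2) * Real.exp (1 - R / (2 * R - ‖x‖)) ^ (1 - a) := by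
  refine ⟨256 * Real.exp 1 * (n + 2), by positivity, ?_⟩
  intro R hR x hx1 hx2 a ha0 ha1
  have hr0 : (0:ℝ) < ‖x‖ := hR.trans hx1
  have hfun : (fun z : EuclideanSpace ℝ (Fin n) => Real.exp (1 - R / (2 * R - ‖z‖)))
      = fun z => Real.exp (1 - R / (2*R - Real.sqrt (‖z‖^2))) := by
    funext z; rw [Real.sqrt_sq (norm_nonneg z)]
  rw [hfun]
  -- the open set where things are differentiable
  set U : Set (EuclideanSpace ℝ (Fin n)) := {y | 0 < ‖y‖} ∩ {y | ‖y‖ < 2*R} with hU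
  have hUo : IsOpen U :=
    (isOpen_lt continuous_const continuous_norm).inter
      (isOpen_lt continuous_norm continuous_const)
  have hxU : x ∈ U := ⟨hr0, by simpa using hx2⟩
  -- derivative of η on U
  have hη : ∀ y ∈ U, HasFDerivAt
      (fun z : EuclideanSpace ℝ (Fin n) => Real.exp (1 - R/(2*R - Real.sqrt (‖z‖^2))))
      ((-(R / (2 * Real.sqrt (‖y‖^2) * (2*R - Real.sqrt (‖y‖^2))^2)) *
          Real.exp (1 - R / (2*R - Real.sqrt (‖y‖^2)))) • (2 • innerSL ℝ y)) y := by
    intro y hy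
    have h0 : (0:ℝ) < ‖y‖ := hy.1
    have hQ : (0:ℝ) < ‖y‖^2 := by positivity
    have hlt : Real.sqrt (‖y‖^2) < 2*R := by
      rw [Real.sqrt_sq h0.le]; exact hy.2
    exact (cle_hasDerivAt_G hQ hlt).comp_hasFDerivAt y
      (hasStrictFDerivAt_norm_sq y).hasFDerivAt
  -- values of the first directional derivative on U
  have hinner : ∀ i : Fin n, ∀ y ∈ U,
      fderiv ℝ (fun z : EuclideanSpace ℝ (Fin n) =>
        Real.exp (1 - R/(2*R - Real.sqrt (‖z‖^2)))) y (EuclideanSpace.single i 1)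
      = (-(R / (2 * Real.sqrt (‖y‖^2) * (2*R - Real.sqrt (‖y‖^2))^2)) *
          Real.exp (1 - R / (2*R - Real.sqrt (‖y‖^2)))) * (2 * y i) := by
    intro i y hy
    rw [(hη y hy).fderiv]
    simp [EuclideanSpace.inner_single_right, real_inner_comm]
  have hQx : (0:ℝ) < ‖x‖^2 := by positivity
  have hsx : Real.sqrt (‖x‖^2) = ‖x‖ := Real.sqrt_sq hr0.le
  have hltx : Real.sqrt (‖x‖^2) < 2*R := by rw [hsx]; exact hx2
  have hcompx : HasFDerivAt (fun y : EuclideanSpace ℝ (Fin n) =>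
      -(R / (2 * Real.sqrt (‖y‖^2) * (2*R - Real.sqrt (‖y‖^2))^2)) *
        Real.exp (1 - R / (2*R - Real.sqrt (‖y‖^2))))
      (((R*((2*R-Real.sqrt (‖x‖^2)) - 2*Real.sqrt (‖x‖^2))/(4*(Real.sqrt (‖x‖^2))^3*(2*R-Real.sqrt (‖x‖^2))^3)
          + R^2/(4*(Real.sqrt (‖x‖^2))^2*(2*R-Real.sqrt (‖x‖^2))^4)) *
        Real.exp (1 - R / (2*R - Real.sqrt (‖x‖^2)))) • (2 • innerSL ℝ x)) x :=
    by exact (cle_hasDerivAt_G1 hQx hltx).comp_hasFDerivAt x (hasStrictFDerivAt_norm_sq x).hasFDerivAt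
  have hproj : ∀ i : Fin n, HasFDerivAt (fun y : EuclideanSpace ℝ (Fin n) => (2:ℝ) * y i)
      ((2:ℝ) • (EuclideanSpace.proj i : EuclideanSpace ℝ (Fin n) →L[ℝ] ℝ)) x := fun i =>
    ((EuclideanSpace.proj i : EuclideanSpace ℝ (Fin n) →L[ℝ] ℝ).hasFDerivAt).const_mul 2
  have hstep : ∀ i : Fin n,
      fderiv ℝ (fun y => fderiv ℝ (fun z : EuclideanSpace ℝ (Fin n) =>
          Real.exp (1 - R/(2*R - Real.sqrt (‖z‖^2)))) y (EuclideanSpace.single i 1)) x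
        (EuclideanSpace.single i 1)
      = (-(R / (2 * ‖x‖ * (2*R - ‖x‖)^2)) * Real.exp (1 - R/(2*R - ‖x‖))) * 2
        + ((R*((2*R-‖x‖) - 2*‖x‖)/(4*‖x‖^3*(2*R-‖x‖)^3)
            + R^2/(4*‖x‖^2*(2*R-‖x‖)^4)) * Real.exp (1 - R/(2*R-‖x‖)))
          * (2*x i) * (2*x i) := by
    intro i
    have heq : (fun y => fderiv ℝ (fun z : EuclideanSpace ℝ (Fin n) =>
          Real.exp (1 - R/(2*R - Real.sqrt (‖z‖^2)))) y (EuclideanSpace.single i 1))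
        =ᶠ[nhds x] (fun y => (-(R / (2 * Real.sqrt (‖y‖^2) * (2*R - Real.sqrt (‖y‖^2))^2)) *
          Real.exp (1 - R / (2*R - Real.sqrt (‖y‖^2)))) * (2 * y i)) := by
      filter_upwards [hUo.mem_nhds hxU] with y hy using hinner i y hy
    rw [heq.fderiv_eq]
    have hH : HasFDerivAt (fun y : EuclideanSpace ℝ (Fin n) => (-(R / (2 * Real.sqrt (‖y‖^2) * (2*R - Real.sqrt (‖y‖^2))^2)) *
          Real.exp (1 - R / (2*R - Real.sqrt (‖y‖^2)))) * (2 * y i)) _ x := hcompx.mul (hproj i)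
    rw [hH.fderiv]
    simp only [ContinuousLinearMap.add_apply, ContinuousLinearMap.smul_apply,
      ContinuousLinearMap.coe_smul', Pi.smul_apply, innerSL_apply_apply,
      EuclideanSpace.inner_single_right, PiLp.proj_apply,
      EuclideanSpace.single_apply, if_pos rfl, eq_self_iff_true, if_true, hsx, smul_eq_mul, conj_trivial]
    ring
  rw [Finset.sum_congr rfl (fun i (_ : i ∈ Finset.univ) => hstep i)]
  have hxsq : ∑ i, (x i)^2 = ‖x‖^2 := by
    rw [EuclideanSpace.norm_eq, Real.sq_sqrt (Finset.sum_nonneg fun i _ => by positivity)]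
    exact Finset.sum_congr rfl fun i _ => by rw [Real.norm_eq_abs, sq_abs]
  rw [cle_sum x _ _, hxsq]
  have hP : (0:ℝ) < 2*R - ‖x‖ := by linarith
  have hn1 : (1:ℝ) ≤ n := by exact_mod_cast hn
  have hΔ : 2*(n:ℝ)*(-(R / (2 * ‖x‖ * (2*R - ‖x‖)^2)) * Real.exp (1 - R/(2*R - ‖x‖)))
      + 4*‖x‖^2*((R*((2*R-‖x‖) - 2*‖x‖)/(4*‖x‖^3*(2*R-‖x‖)^3)
          + R^2/(4*‖x‖^2*(2*R-‖x‖)^4)) * Real.exp (1 - R/(2*R-‖x‖)))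
      = Real.exp (1 - R/(2*R - ‖x‖)) * (R^2/(2*R-‖x‖)^4 - 2*R/(2*R-‖x‖)^3
          - ((n:ℝ)-1)*(R^2/(2*R-‖x‖)^4) * ((2*R-‖x‖)^2/(R*‖x‖))) := by
    field_simp
    ring
  rw [hΔ, abs_mul, abs_of_pos (Real.exp_pos _)]
  -- bound the bracket
  have t1 : (0:ℝ) ≤ R^2/(2*R-‖x‖)^4 := by positivity
  have t2 : (0:ℝ) ≤ 2*R/(2*R-‖x‖)^3 := by positivity
  have hPR : 2*R-‖x‖ < R := by linarith
  have b1 : 2*R/(2*R-‖x‖)^3 ≤ 2*(R^2/(2*R-‖x‖)^4) := by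
    rw [show 2*(R^2/(2*R-‖x‖)^4) = 2*R^2/(2*R-‖x‖)^4 from by ring,
      div_le_div_iff₀ (by positivity) (by positivity)]
    nlinarith [mul_le_mul_of_nonneg_left hPR.le
      (show (0:ℝ) ≤ 2*R*(2*R-‖x‖)^3 by positivity)]
  have hc : (0:ℝ) ≤ ((n:ℝ)-1)*(R^2/(2*R-‖x‖)^4) := mul_nonneg (by linarith) t1
  have hq : (2*R-‖x‖)^2/(R*‖x‖) ≤ 1 := by
    rw [div_le_one (by positivity)]
    nlinarith
  have hq0 : (0:ℝ) ≤ (2*R-‖x‖)^2/(R*‖x‖) := by positivity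
  have b2 : ((n:ℝ)-1)*(R^2/(2*R-‖x‖)^4) * ((2*R-‖x‖)^2/(R*‖x‖))
      ≤ ((n:ℝ)-1)*(R^2/(2*R-‖x‖)^4) := by
    simpa using mul_le_mul_of_nonneg_left hq hc
  have t3 : (0:ℝ) ≤ ((n:ℝ)-1)*(R^2/(2*R-‖x‖)^4) * ((2*R-‖x‖)^2/(R*‖x‖)) :=
    mul_nonneg hc hq0
  have hnn : (0:ℝ) ≤ ((n:ℝ)+1) * (R^2/(2*R-‖x‖)^4) := mul_nonneg (by linarith) t1
  have habs : |R^2/(2*R-‖x‖)^4 - 2*R/(2*R-‖x‖)^3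
      - ((n:ℝ)-1)*(R^2/(2*R-‖x‖)^4) * ((2*R-‖x‖)^2/(R*‖x‖))|
      ≤ ((n:ℝ)+2)*(R^2/(2*R-‖x‖)^4) := by
    rw [abs_le]
    constructor
    · nlinarith [b1, b2, t1, t2, t3]
    · nlinarith [b1, b2, t1, t2, t3, hnn]
  refine le_trans (mul_le_mul_of_nonneg_left habs (Real.exp_pos _).le) ?_
  -- final exponential estimate
  rw [← Real.exp_mul]
  have hsplit : Real.exp (1 - R/(2*R-‖x‖))
      = Real.exp ((1 - R/(2*R-‖x‖))*(1-a)) * Real.exp ((1 - R/(2*R-‖x‖))*a) := by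
    rw [← Real.exp_add]; ring_nf
  rw [hsplit, mul_assoc, mul_comm (256 * Real.exp 1 * ((n:ℝ) + 2) / (a^4*R^2))]
  refine mul_le_mul_of_nonneg_left ?_ (Real.exp_pos _).le
  have hT : (0:ℝ) < a*R/(2*R-‖x‖) := by positivity
  have h4 := cle_pow4 hT.le
  have hinv : 1/Real.exp (a*R/(2*R-‖x‖)) ≤ 256/(a*R/(2*R-‖x‖))^4 := by
    rw [div_le_div_iff₀ (Real.exp_pos _) (by positivity)]
    nlinarith [h4]
  have harg : (1 - R/(2*R-‖x‖))*a = a - a*R/(2*R-‖x‖) := by ring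
  rw [harg, Real.exp_sub]
  have h5 : Real.exp a / Real.exp (a*R/(2*R-‖x‖)) ≤ Real.exp 1 * (256/(a*R/(2*R-‖x‖))^4) := by
    rw [div_eq_mul_one_div]
    exact mul_le_mul (Real.exp_le_exp.2 ha1.le) hinv (by positivity) (Real.exp_pos 1).le
  calc Real.exp a / Real.exp (a*R/(2*R-‖x‖)) * (((n:ℝ)+2)*(R^2/(2*R-‖x‖)^4))
      ≤ Real.exp 1 * (256/(a*R/(2*R-‖x‖))^4) * (((n:ℝ)+2)*(R^2/(2*R-‖x‖)^4)) :=
        mul_le_mul_of_nonneg_right h5 (by positivity)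
    _ = 256 * Real.exp 1 * ((n:ℝ)+2) / (a^4*R^2) := by
        field_simp
        exact div_self (by linarith : (0:ℝ) < R*2 - ‖x‖).ne'
end

section
/- (Generalized Shannon's inequality) Let n ≥ 2 and n/(n+2) < m < 1, and set σ = n(1-m)/(2m). Then there exists a constant C > 0 depending only on n such that for every f : ℝ^n → ℝ with f ∈ L¹(ℝ^n) and |x|² f(x) ∈ L¹(ℝ^n), one has ∫_{ℝ^n} |f(x)|^m dx ≤ C ‖f‖₁^{m(1-σ)} (∫_{ℝ^n} |x|² |f(x)| dx)^{mσ}. -/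
open MeasureTheory

open Real Filter

open scoped ENNReal NNReal


lemma shannon_weight_integral (n : ℕ) (p lam : ℝ) (hlam : 0 < lam) :
    ∫ x : EuclideanSpace ℝ (Fin n), (lam + ‖x‖ ^ 2) ^ (-p) =
      lam ^ ((n : ℝ) / 2 - p) * ∫ y : EuclideanSpace ℝ (Fin n), (1 + ‖y‖ ^ 2) ^ (-p) := by
  set s := Real.sqrt lam with hs
  have hs0 : 0 < s := Real.sqrt_pos.2 hlam
  have hs2 : s ^ 2 = lam := Real.sq_sqrt hlam.le
  have key : ∀ x : EuclideanSpace ℝ (Fin n), (lam + ‖x‖ ^ 2) ^ (-p)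
      = lam ^ (-p) * (fun y : EuclideanSpace ℝ (Fin n) => (1 + ‖y‖ ^ 2) ^ (-p)) (s⁻¹ • x) := by
    intro x
    have h1 : (1 : ℝ) + ‖s⁻¹ • x‖ ^ 2 = (lam + ‖x‖ ^ 2) / lam := by
      rw [norm_smul, Real.norm_eq_abs, abs_of_pos (inv_pos.2 hs0), mul_pow, inv_pow, hs2]
      field_simp
    simp only
    rw [h1, Real.div_rpow (by positivity) hlam.le, Real.rpow_neg hlam.le]
    field_simp
  calc ∫ x : EuclideanSpace ℝ (Fin n), (lam + ‖x‖ ^ 2) ^ (-p)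
      = ∫ x : EuclideanSpace ℝ (Fin n),
          lam ^ (-p) * (fun y : EuclideanSpace ℝ (Fin n) => (1 + ‖y‖ ^ 2) ^ (-p)) (s⁻¹ • x) := by
        simp only [key]
    _ = lam ^ (-p) * ∫ x : EuclideanSpace ℝ (Fin n),
          (fun y : EuclideanSpace ℝ (Fin n) => (1 + ‖y‖ ^ 2) ^ (-p)) (s⁻¹ • x) :=
        integral_const_mul _ _
    _ = lam ^ (-p) * (|s ^ Module.finrank ℝ (EuclideanSpace ℝ (Fin n))| •
          ∫ y : EuclideanSpace ℝ (Fin n), (1 + ‖y‖ ^ 2) ^ (-p)) :=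
        congrArg _ (MeasureTheory.Measure.integral_comp_inv_smul volume
          (fun y : EuclideanSpace ℝ (Fin n) => (1 + ‖y‖ ^ 2) ^ (-p)) s)
    _ = lam ^ ((n : ℝ) / 2 - p) * ∫ y : EuclideanSpace ℝ (Fin n), (1 + ‖y‖ ^ 2) ^ (-p) := by
        have h2 : s ^ Module.finrank ℝ (EuclideanSpace ℝ (Fin n)) = lam ^ ((n : ℝ) / 2) := by
          rw [finrank_euclideanSpace_fin, hs, Real.sqrt_eq_rpow,
            ← Real.rpow_natCast (lam ^ (1/2 : ℝ)) n, ← Real.rpow_mul hlam.le]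
          norm_num
          rw [mul_comm, mul_one_div]
        rw [h2, abs_of_pos (Real.rpow_pos_of_pos hlam _), smul_eq_mul, ← mul_assoc,
          ← Real.rpow_add hlam]
        rw [show -p + (n : ℝ) / 2 = (n : ℝ) / 2 - p from by ring]

lemma shannon_memLp_rpow {α : Type*} [MeasurableSpace α] {μ : Measure α} {u : α → ℝ}
    (hu : Integrable u μ) (hu0 : ∀ x, 0 ≤ u x) {m : ℝ} (hm : 0 < m) :
    MemLp (fun x => u x ^ m) (ENNReal.ofReal (1 / m)) μ := by
  have h1 : MemLp u 1 μ := memLp_one_iff_integrable.2 hu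
  have h2 : MemLp (fun x => ‖u x‖ ^ (ENNReal.ofReal m).toReal) (1 / ENNReal.ofReal m) μ :=
    (memLp_norm_rpow_iff h1.1
      (by simp [ENNReal.ofReal_eq_zero, not_le, hm]) ENNReal.ofReal_ne_top).2 h1
  have h3 : (1 : ℝ≥0∞) / ENNReal.ofReal m = ENNReal.ofReal (1 / m) := by
    rw [one_div, one_div, ← ENNReal.ofReal_inv_of_pos hm]
  rw [h3] at h2
  have h4 : (fun x => u x ^ m) = fun x => ‖u x‖ ^ (ENNReal.ofReal m).toReal := by
    ext x
    rw [Real.norm_of_nonneg (hu0 x), ENNReal.toReal_ofReal hm.le]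
  rw [h4]
  exact h2

/-- **Generalized Shannon's inequality.** Let `n ≥ 2` and `n/(n+2) < m < 1`, and set
`σ = n(1-m)/(2m)`. There is a constant `C > 0` depending only on `n` such that for every
`f ∈ L¹₂(ℝⁿ)` (i.e. `f` and `|x|² f` integrable),
`∫ |f|^m ≤ C * ‖f‖₁^(m(1-σ)) * (∫ |x|² |f(x)| dx)^(mσ)`. -/
theorem generalized_shannon_inequality (n : ℕ) (hn : 2 ≤ n) (m : ℝ)
    (hm1 : (n : ℝ) / (n + 2) < m) (hm2 : m < 1) :
    ∃ C > 0, ∀ f : EuclideanSpace ℝ (Fin n) → ℝ,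
      Integrable f → Integrable (fun x => ‖x‖ ^ 2 * f x) →
      ∫ x : EuclideanSpace ℝ (Fin n), |f x| ^ m ≤
        C * (∫ x : EuclideanSpace ℝ (Fin n), |f x|) ^ (m * (1 - n * (1 - m) / (2 * m))) *
          (∫ x : EuclideanSpace ℝ (Fin n), ‖x‖ ^ 2 * |f x|) ^ (m * (n * (1 - m) / (2 * m))) := by
  have hn2 : (2 : ℝ) ≤ (n : ℝ) := by exact_mod_cast hn
  have hm0 : 0 < m := (div_pos (by linarith) (by linarith)).trans hm1
  have h1m : 0 < 1 - m := by linarith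
  set p : ℝ := m / (1 - m) with hp_def
  have hp0 : 0 < p := div_pos hm0 h1m
  have hpm : p * (1 - m) = m := div_mul_cancel₀ m h1m.ne'
  have hnm : (n : ℝ) * (1 - m) < 2 * m := by
    have h := (div_lt_iff₀ (by linarith : (0:ℝ) < (n:ℝ) + 2)).mp hm1
    nlinarith
  have hnp : (n : ℝ) < 2 * p := by
    rw [hp_def, mul_div_assoc', lt_div_iff₀ h1m]
    linarith
  -- the reference integral
  set I₁ : ℝ := ∫ y : EuclideanSpace ℝ (Fin n), (1 + ‖y‖ ^ 2) ^ (-p) with hI₁_def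
  have hI₁0 : 0 ≤ I₁ :=
    integral_nonneg fun y => Real.rpow_nonneg (by positivity) _
  have hI : Integrable (fun y : EuclideanSpace ℝ (Fin n) => (1 + ‖y‖ ^ 2) ^ (-p)) := by
    have h := integrable_rpow_neg_one_add_norm_sq (E := EuclideanSpace ℝ (Fin n))
      (μ := volume) (r := 2 * p) (by rw [finrank_euclideanSpace_fin]; exact hnp)
    have h2 : -(2 * p) / 2 = -p := by ring
    rwa [h2] at h
  -- exponent bookkeeping
  have he₂ : m * ((n : ℝ) * (1 - m) / (2 * m)) = (n : ℝ) * (1 - m) / 2 := by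
    field_simp
  have he₁ : m * (1 - (n : ℝ) * (1 - m) / (2 * m)) = m - (n : ℝ) * (1 - m) / 2 := by
    field_simp
  refine ⟨2 * (I₁ + 1), by positivity, fun f hf hf2 => ?_⟩
  have hf' : Integrable (fun x : EuclideanSpace ℝ (Fin n) => |f x|) := hf.abs
  have hf2' : Integrable (fun x : EuclideanSpace ℝ (Fin n) => ‖x‖ ^ 2 * |f x|) := by
    have h := hf2.abs
    have : (fun x : EuclideanSpace ℝ (Fin n) => |‖x‖ ^ 2 * f x|)
        = fun x : EuclideanSpace ℝ (Fin n) => ‖x‖ ^ 2 * |f x| := by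
      ext x
      rw [abs_mul, abs_of_nonneg (by positivity : (0:ℝ) ≤ ‖x‖ ^ 2)]
    rwa [this] at h
  set A : ℝ := ∫ x : EuclideanSpace ℝ (Fin n), |f x| with hA_def
  set M : ℝ := ∫ x : EuclideanSpace ℝ (Fin n), ‖x‖ ^ 2 * |f x| with hM_def
  have hA0 : 0 ≤ A := integral_nonneg fun x => abs_nonneg _
  have hM0 : 0 ≤ M := integral_nonneg fun x => by positivity
  rcases eq_or_lt_of_le hA0 with hA | hA
  · -- degenerate case `A = 0`: then `f = 0` a.e. and both sides vanish
    have h0 : (fun x : EuclideanSpace ℝ (Fin n) => |f x|) =ᵐ[volume] 0 :=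
      (integral_eq_zero_iff_of_nonneg (fun x => abs_nonneg _) hf').mp hA.symm
    have hL : ∫ x : EuclideanSpace ℝ (Fin n), |f x| ^ m = 0 := by
      rw [integral_congr_ae (g := fun _ => (0:ℝ)) ?_, integral_const, smul_zero]
      filter_upwards [h0] with x hx
      simp only [Pi.zero_apply] at hx
      rw [hx, Real.zero_rpow hm0.ne']
    rw [hL]
    positivity
  · -- main case `0 < A`; first show `0 < M`
    haveI : Nontrivial (EuclideanSpace ℝ (Fin n)) :=
      Module.nontrivial_of_finrank_pos (R := ℝ)
        (by rw [finrank_euclideanSpace_fin]; omega)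
    have hM : 0 < M := by
      rcases eq_or_lt_of_le hM0 with hM | hM
      · exfalso
        have h0 : (fun x : EuclideanSpace ℝ (Fin n) => ‖x‖ ^ 2 * |f x|) =ᵐ[volume] 0 :=
          (integral_eq_zero_iff_of_nonneg (fun x => by positivity) hf2').mp hM.symm
        have hne : ∀ᵐ x : EuclideanSpace ℝ (Fin n), x ≠ 0 := by
          rw [ae_iff]
          have : {x : EuclideanSpace ℝ (Fin n) | ¬x ≠ 0} = {0} := by ext x; simp
          rw [this]
          exact measure_singleton 0
        have hf0 : (fun x : EuclideanSpace ℝ (Fin n) => |f x|) =ᵐ[volume] 0 := by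
          filter_upwards [h0, hne] with x hx hxne
          simp only [Pi.zero_apply] at hx ⊢
          have hnx : (0:ℝ) < ‖x‖ ^ 2 := pow_pos (norm_pos_iff.mpr hxne) 2
          have := mul_eq_zero.mp hx
          rcases this with h | h
          · exact absurd h hnx.ne'
          · exact h
        have : A = 0 := by
          rw [hA_def, integral_congr_ae hf0]; simp
        exact hA.ne' this
      · exact hM
    set lam : ℝ := M / A with hlam_def
    have hlam : 0 < lam := div_pos hM hA
    have hw : ∀ x : EuclideanSpace ℝ (Fin n), 0 < lam + ‖x‖ ^ 2 := fun x => by positivity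
    -- integrability facts
    have hfw_int : Integrable (fun x : EuclideanSpace ℝ (Fin n) => |f x| * (lam + ‖x‖ ^ 2)) := by
      have hcongr : (fun x : EuclideanSpace ℝ (Fin n) => |f x| * (lam + ‖x‖ ^ 2))
          = fun x => lam * |f x| + ‖x‖ ^ 2 * |f x| := by ext x; ring
      rw [hcongr]
      exact (hf'.const_mul lam).add hf2'
    have hweight_int :
        Integrable (fun x : EuclideanSpace ℝ (Fin n) => (lam + ‖x‖ ^ 2) ^ (-p)) := by
      set s : ℝ := Real.sqrt lam with hs
      have hs0 : 0 < s := Real.sqrt_pos.2 hlam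
      have hs2 : s ^ 2 = lam := Real.sq_sqrt hlam.le
      have key : ∀ x : EuclideanSpace ℝ (Fin n), (lam + ‖x‖ ^ 2) ^ (-p)
          = lam ^ (-p) *
            (fun y : EuclideanSpace ℝ (Fin n) => (1 + ‖y‖ ^ 2) ^ (-p)) (s⁻¹ • x) := by
        intro x
        have h1 : (1 : ℝ) + ‖s⁻¹ • x‖ ^ 2 = (lam + ‖x‖ ^ 2) / lam := by
          rw [norm_smul, Real.norm_eq_abs, abs_of_pos (inv_pos.2 hs0), mul_pow, inv_pow, hs2]
          field_simp
        simp only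
        rw [h1, Real.div_rpow (by positivity) hlam.le, Real.rpow_neg hlam.le]
        field_simp
      have : (fun x : EuclideanSpace ℝ (Fin n) => (lam + ‖x‖ ^ 2) ^ (-p))
          = fun x => lam ^ (-p) *
            (fun y : EuclideanSpace ℝ (Fin n) => (1 + ‖y‖ ^ 2) ^ (-p)) (s⁻¹ • x) := by
        ext x; exact key x
      rw [this]
      exact (hI.comp_smul (inv_ne_zero hs0.ne')).const_mul _
    -- Hölder
    have hpq : (1 / m).HolderConjugate (1 / (1 - m)) := by
      rw [Real.holderConjugate_iff]
      constructor
      · rw [lt_div_iff₀ hm0]; linarith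
      · rw [one_div, one_div, inv_inv, inv_inv]; ring
    have hF : MemLp (fun x : EuclideanSpace ℝ (Fin n) => (|f x| * (lam + ‖x‖ ^ 2)) ^ m)
        (ENNReal.ofReal (1 / m)) volume :=
      shannon_memLp_rpow hfw_int (fun x => mul_nonneg (abs_nonneg _) (hw x).le) hm0
    have hG : MemLp (fun x : EuclideanSpace ℝ (Fin n) => (lam + ‖x‖ ^ 2) ^ (-m))
        (ENNReal.ofReal (1 / (1 - m))) volume := by
      have h := shannon_memLp_rpow hweight_int (fun x => Real.rpow_nonneg (hw x).le _) h1m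
      have hcongr : (fun x : EuclideanSpace ℝ (Fin n) => ((lam + ‖x‖ ^ 2) ^ (-p)) ^ (1 - m))
          = fun x : EuclideanSpace ℝ (Fin n) => (lam + ‖x‖ ^ 2) ^ (-m) := by
        ext x
        rw [← Real.rpow_mul (hw x).le]
        congr 1
        rw [neg_mul, hpm]
      rwa [hcongr] at h
    have holder := integral_mul_le_Lp_mul_Lq_of_nonneg hpq
      (Eventually.of_forall fun x => Real.rpow_nonneg
        (mul_nonneg (abs_nonneg _) (hw x).le) _)
      (Eventually.of_forall fun x => Real.rpow_nonneg (hw x).le _) hF hG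
    -- rewrite the three integrals in `holder`
    have hlhs : ∀ x : EuclideanSpace ℝ (Fin n),
        (|f x| * (lam + ‖x‖ ^ 2)) ^ m * (lam + ‖x‖ ^ 2) ^ (-m) = |f x| ^ m := fun x => by
      rw [Real.mul_rpow (abs_nonneg _) (hw x).le, mul_assoc, ← Real.rpow_add (hw x),
        add_neg_cancel, Real.rpow_zero, mul_one]
    have hrhs1 : ∀ x : EuclideanSpace ℝ (Fin n),
        ((|f x| * (lam + ‖x‖ ^ 2)) ^ m) ^ (1 / m) = |f x| * (lam + ‖x‖ ^ 2) := fun x => by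
      rw [← Real.rpow_mul (mul_nonneg (abs_nonneg _) (hw x).le),
        mul_one_div_cancel hm0.ne', Real.rpow_one]
    have hrhs2 : ∀ x : EuclideanSpace ℝ (Fin n),
        ((lam + ‖x‖ ^ 2) ^ (-m)) ^ (1 / (1 - m)) = (lam + ‖x‖ ^ 2) ^ (-p) := fun x => by
      rw [← Real.rpow_mul (hw x).le]
      congr 1
      rw [hp_def]
      field_simp
    simp only [hlhs, hrhs1, hrhs2, one_div_one_div] at holder
    -- compute the two integrals on the right
    have hJ : ∫ x : EuclideanSpace ℝ (Fin n), |f x| * (lam + ‖x‖ ^ 2) = 2 * M := by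
      have hcongr : (fun x : EuclideanSpace ℝ (Fin n) => |f x| * (lam + ‖x‖ ^ 2))
          = fun x => lam * |f x| + ‖x‖ ^ 2 * |f x| := by ext x; ring
      rw [hcongr, integral_add ((hf'.const_mul lam)) hf2', integral_const_mul,
        ← hA_def, ← hM_def, hlam_def, div_mul_cancel₀ M hA.ne']
      ring
    have hK : ∫ x : EuclideanSpace ℝ (Fin n), (lam + ‖x‖ ^ 2) ^ (-p)
        = lam ^ ((n : ℝ) / 2 - p) * I₁ := shannon_weight_integral n p lam hlam
    rw [hJ, hK] at holder
    refine holder.trans ?_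
    -- final computation
    have ht : ((n : ℝ) / 2 - p) * (1 - m) = (n : ℝ) * (1 - m) / 2 - m := by
      rw [sub_mul, hpm]; ring
    have hM_split : M ^ ((n : ℝ) * (1 - m) / 2)
        = M ^ m * M ^ ((n : ℝ) * (1 - m) / 2 - m) := by
      rw [← Real.rpow_add hM]
      congr 1
      ring
    have h2m : (2 : ℝ) ^ m ≤ 2 := by
      calc (2 : ℝ) ^ m ≤ (2 : ℝ) ^ (1 : ℝ) :=
            Real.rpow_le_rpow_of_exponent_le one_le_two hm2.le
        _ = 2 := Real.rpow_one 2
    have hI₁m : I₁ ^ (1 - m) ≤ I₁ + 1 := by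
      rcases le_or_gt I₁ 1 with h | h
      · have := Real.rpow_le_one hI₁0 h (by linarith : (0:ℝ) ≤ 1 - m)
        linarith
      · have h2 : I₁ ^ (1 - m) ≤ I₁ ^ (1 : ℝ) :=
          Real.rpow_le_rpow_of_exponent_le h.le (by linarith)
        rw [Real.rpow_one] at h2
        linarith
    have hCbound : 2 ^ m * I₁ ^ (1 - m) ≤ 2 * (I₁ + 1) :=
      mul_le_mul h2m hI₁m (Real.rpow_nonneg hI₁0 _) (by norm_num)
    rw [he₁, he₂]
    calc (2 * M) ^ m * (lam ^ ((n : ℝ) / 2 - p) * I₁) ^ (1 - m)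
        = (2 ^ m * I₁ ^ (1 - m)) *
          (A ^ (m - (n : ℝ) * (1 - m) / 2) * M ^ ((n : ℝ) * (1 - m) / 2)) := by
          rw [Real.mul_rpow (by norm_num : (0:ℝ) ≤ 2) hM0,
            Real.mul_rpow (Real.rpow_nonneg hlam.le _) hI₁0,
            ← Real.rpow_mul hlam.le, ht, hlam_def,
            Real.div_rpow hM0 hA0, div_eq_mul_inv, ← Real.rpow_neg hA0, neg_sub,
            hM_split]
          ring
      _ ≤ (2 * (I₁ + 1)) *
          (A ^ (m - (n : ℝ) * (1 - m) / 2) * M ^ ((n : ℝ) * (1 - m) / 2)) := by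
          apply mul_le_mul_of_nonneg_right hCbound
          exact mul_nonneg (Real.rpow_nonneg hA0 _) (Real.rpow_nonneg hM0 _)
      _ = 2 * (I₁ + 1) * A ^ (m - (n : ℝ) * (1 - m) / 2) *
          M ^ ((n : ℝ) * (1 - m) / 2) := by ring
end

section
/- Let n ≥ 2, (n-2)/n < m < 1, λ = 2 - n(1-m), α = 2mλ/(1-m), and β > 0. Define U(x,t) = (αt/(|x|² + β t^{2/λ}))^{1/(1-m)} for x ∈ ℝ^n and t > 0. Then U solves the fast diffusion equation pointwise: ∂_t U(x,t) = Δ_x (U^m)(x,t) for all x ∈ ℝ^n and t > 0. -/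
open Real

/-- The Barenblatt solution `U(x,t) = (αt/(|x|² + β t^(2/λ)))^(1/(1-m))` of the fast
diffusion equation. -/
noncomputable def barenblattSolution (n : ℕ) (m α β lam : ℝ)
    (x : EuclideanSpace ℝ (Fin n)) (t : ℝ) : ℝ :=
  (α * t / (‖x‖ ^ 2 + β * t ^ (2 / lam))) ^ (1 / (1 - m))

lemma radial_laplacian {n : ℕ} (F F' F'' : ℝ → ℝ)
    (hF : ∀ r : ℝ, 0 ≤ r → HasDerivAt F (F' r) r)
    (hF' : ∀ r : ℝ, 0 ≤ r → HasDerivAt F' (F'' r) r)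
    (x : EuclideanSpace ℝ (Fin n)) :
    ∑ i : Fin n,
      fderiv ℝ (fun y => fderiv ℝ (fun z : EuclideanSpace ℝ (Fin n) => F (‖z‖ ^ 2)) y
        (EuclideanSpace.single i 1)) x (EuclideanSpace.single i 1)
      = 4 * ‖x‖ ^ 2 * F'' (‖x‖ ^ 2) + 2 * n * F' (‖x‖ ^ 2) := by
  have key : ∀ y : EuclideanSpace ℝ (Fin n),
      HasFDerivAt (fun z : EuclideanSpace ℝ (Fin n) => F (‖z‖ ^ 2))
        ((F' (‖y‖ ^ 2)) • (2 • (innerSL ℝ y))) y := fun y =>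
    HasDerivAt.comp_hasFDerivAt y (hF _ (by positivity)) (hasStrictFDerivAt_norm_sq y).hasFDerivAt
  have fd1 : ∀ (y : EuclideanSpace ℝ (Fin n)) (i : Fin n),
      fderiv ℝ (fun z : EuclideanSpace ℝ (Fin n) => F (‖z‖ ^ 2)) y (EuclideanSpace.single i 1)
        = F' (‖y‖ ^ 2) * (2 * y i) := by
    intro y i
    rw [(key y).fderiv]
    simp [EuclideanSpace.inner_single_right, real_inner_comm]
  have step : ∀ i : Fin n,
      fderiv ℝ (fun y : EuclideanSpace ℝ (Fin n) =>
        fderiv ℝ (fun z : EuclideanSpace ℝ (Fin n) => F (‖z‖ ^ 2)) y (EuclideanSpace.single i 1))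
        x (EuclideanSpace.single i 1)
      = 4 * (x i) ^ 2 * F'' (‖x‖ ^ 2) + 2 * F' (‖x‖ ^ 2) := by
    intro i
    have hrw : (fun y : EuclideanSpace ℝ (Fin n) =>
        fderiv ℝ (fun z : EuclideanSpace ℝ (Fin n) => F (‖z‖ ^ 2)) y (EuclideanSpace.single i 1))
        = fun y : EuclideanSpace ℝ (Fin n) => F' (‖y‖ ^ 2) * (2 * y i) := funext fun y => fd1 y i
    rw [hrw]
    have hc : HasFDerivAt (fun y : EuclideanSpace ℝ (Fin n) => F' (‖y‖ ^ 2))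
        ((F'' (‖x‖ ^ 2)) • (2 • (innerSL ℝ x))) x :=
      HasDerivAt.comp_hasFDerivAt x (hF' _ (by positivity))
        (hasStrictFDerivAt_norm_sq x).hasFDerivAt
    have hd : HasFDerivAt (fun y : EuclideanSpace ℝ (Fin n) => 2 * y i)
        ((2 : ℝ) • (EuclideanSpace.proj (𝕜 := ℝ) i)) x := by
      exact ((EuclideanSpace.proj (𝕜 := ℝ) i).hasFDerivAt (x := x)).const_mul (2 : ℝ)
    have := (hc.mul hd).fderiv
    rw [show (fun y : EuclideanSpace ℝ (Fin n) => F' (‖y‖ ^ 2) * (2 * y i)) =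
        (fun y => F' (‖y‖ ^ 2)) * (fun y => 2 * y i) from rfl, this]
    simp [EuclideanSpace.inner_single_right, real_inner_comm]
    ring
  rw [Finset.sum_congr rfl fun i _ => step i]
  rw [Finset.sum_add_distrib, ← Finset.sum_mul, Finset.sum_const]
  have hx2 : ∑ i : Fin n, 4 * (x i) ^ 2 = 4 * ‖x‖ ^ 2 := by
    rw [← Finset.mul_sum]
    congr 1
    rw [PiLp.norm_sq_eq_of_L2]
    simp [Real.norm_eq_abs, sq_abs]
  rw [hx2]
  simp only [Finset.card_univ, Fintype.card_fin, nsmul_eq_mul]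
  ring

/-- Let `n ≥ 2`, `(n-2)/n < m < 1`, `λ = 2 - n(1-m)`, `α = 2mλ/(1-m)` and `β > 0`. Then the
Barenblatt profile `U(x,t) = (αt/(|x|² + β t^(2/λ)))^(1/(1-m))` solves the fast diffusion
equation pointwise: `∂ₜU(x,t) = Δₓ(U^m)(x,t)` for all `x ∈ ℝⁿ`, `t > 0`, where the Laplacian
is the sum of repeated second directional derivatives along the standard basis. -/
theorem barenblatt_solves_fast_diffusion (n : ℕ) (hn : 2 ≤ n) (m β lam α : ℝ)
    (hm1 : ((n : ℝ) - 2) / n < m) (hm2 : m < 1) (hβ : 0 < β)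
    (hlam : lam = 2 - n * (1 - m)) (hα : α = 2 * m * lam / (1 - m)) :
    ∀ (x : EuclideanSpace ℝ (Fin n)) (t : ℝ), 0 < t →
      deriv (fun s => barenblattSolution n m α β lam x s) t =
        ∑ i : Fin n,
          fderiv ℝ (fun y : EuclideanSpace ℝ (Fin n) =>
              fderiv ℝ (fun z : EuclideanSpace ℝ (Fin n) =>
                  barenblattSolution n m α β lam z t ^ m) y (EuclideanSpace.single i 1))
            x (EuclideanSpace.single i 1) := by
  intro x t ht
  have hn0 : (0 : ℝ) < n := by positivity
  have h1m : (0 : ℝ) < 1 - m := by linarith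
  have hm0 : 0 < m := by
    have h2 : (0:ℝ) ≤ ((n : ℝ) - 2) / n := by
      apply div_nonneg _ hn0.le
      have : (2:ℝ) ≤ n := by exact_mod_cast hn
      linarith
    linarith
  have hnm : (n : ℝ) - 2 < m * n := (div_lt_iff₀ hn0).mp hm1
  have hlam0 : 0 < lam := by rw [hlam]; nlinarith
  have hα0 : 0 < α := by rw [hα]; positivity
  have hc : 0 < β * t ^ (2 / lam) := mul_pos hβ (rpow_pos_of_pos ht _)
  have ha : 0 < α * t := mul_pos hα0 ht
  set q : ℝ := m / (1 - m) with hq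
  have hD : ∀ r : ℝ, 0 ≤ r → 0 < r + β * t ^ (2 / lam) := fun r hr => by positivity
  have hDx : 0 < ‖x‖ ^ 2 + β * t ^ (2 / lam) := hD _ (by positivity)
  set F : ℝ → ℝ := fun r => (α * t) ^ q * (r + β * t ^ (2 / lam)) ^ (-q) with hF
  set F' : ℝ → ℝ := fun r => (α * t) ^ q * (-q * (r + β * t ^ (2 / lam)) ^ (-q - 1)) with hF'
  set F'' : ℝ → ℝ :=
    fun r => (α * t) ^ q * (-q * ((-q - 1) * (r + β * t ^ (2 / lam)) ^ (-q - 2))) with hF''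
  have hFd : ∀ r : ℝ, 0 ≤ r → HasDerivAt F (F' r) r := by
    intro r hr
    have h : HasDerivAt (fun u : ℝ => u + β * t ^ (2 / lam)) 1 r :=
      (hasDerivAt_id r).add_const _
    have h2 := (h.rpow_const (p := -q) (Or.inl (hD r hr).ne')).const_mul ((α * t) ^ q)
    refine h2.congr_deriv ?_
    simp only [hF']
    ring_nf
  have hF'd : ∀ r : ℝ, 0 ≤ r → HasDerivAt F' (F'' r) r := by
    intro r hr
    have h : HasDerivAt (fun u : ℝ => u + β * t ^ (2 / lam)) 1 r :=
      (hasDerivAt_id r).add_const _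
    have h2 := ((h.rpow_const (p := -q - 1) (Or.inl (hD r hr).ne')).const_mul (-q)).const_mul
      ((α * t) ^ q)
    have e : -q - 1 - 1 = -q - 2 := by ring
    rw [e] at h2
    refine h2.congr_deriv ?_
    simp only [hF'']
    ring_nf
  have hrad : (fun z : EuclideanSpace ℝ (Fin n) => barenblattSolution n m α β lam z t ^ m)
      = fun z : EuclideanSpace ℝ (Fin n) => F (‖z‖ ^ 2) := by
    funext z
    have hDz : 0 < ‖z‖ ^ 2 + β * t ^ (2 / lam) := hD _ (by positivity)
    have hbase : (0:ℝ) < α * t / (‖z‖ ^ 2 + β * t ^ (2 / lam)) := div_pos ha hDz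
    simp only [barenblattSolution, hF]
    rw [← Real.rpow_mul hbase.le]
    rw [show 1 / (1 - m) * m = q by rw [hq]; field_simp]
    rw [Real.div_rpow ha.le hDz.le, Real.rpow_neg hDz.le, div_eq_mul_inv]
  rw [hrad, radial_laplacian F F' F'' hFd hF'd x]
  -- time derivative
  have h1 : HasDerivAt (fun s : ℝ => s ^ (2 / lam)) ((2 / lam) * t ^ (2 / lam - 1)) t :=
    Real.hasDerivAt_rpow_const (Or.inl ht.ne')
  have h2 : HasDerivAt (fun s : ℝ => ‖x‖ ^ 2 + β * s ^ (2 / lam))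
      (β * ((2 / lam) * t ^ (2 / lam - 1))) t := (h1.const_mul β).const_add (‖x‖ ^ 2)
  have h3 : HasDerivAt (fun s : ℝ => α * s) α t := by
    simpa using (hasDerivAt_id t).const_mul α
  have h4 := h3.div h2 hDx.ne'
  have h5 := h4.rpow_const (p := 1 / (1 - m)) (Or.inl (div_pos ha hDx).ne')
  have hderiv : deriv (fun s => barenblattSolution n m α β lam x s) t =
      (α * (‖x‖ ^ 2 + β * t ^ (2 / lam)) - α * t * (β * ((2 / lam) * t ^ (2 / lam - 1)))) /
        (‖x‖ ^ 2 + β * t ^ (2 / lam)) ^ 2 * (1 / (1 - m)) *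
        (α * t / (‖x‖ ^ 2 + β * t ^ (2 / lam))) ^ (1 / (1 - m) - 1) := by
    simp only [barenblattSolution]
    exact h5.deriv
  rw [hderiv]
  -- now a pure computation
  have hqe : 1 / (1 - m) - 1 = q := by rw [hq]; field_simp; ring
  rw [hqe]
  rw [Real.div_rpow ha.le hDx.le]
  simp only [hF', hF'']
  have e1 : (‖x‖ ^ 2 + β * t ^ (2 / lam)) ^ (-q - 1)
      = (((‖x‖ ^ 2 + β * t ^ (2 / lam)) ^ q) * (‖x‖ ^ 2 + β * t ^ (2 / lam)))⁻¹ := by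
    rw [show -q - 1 = -(q + 1) by ring, Real.rpow_neg hDx.le, Real.rpow_add hDx, Real.rpow_one]
  have e2 : (‖x‖ ^ 2 + β * t ^ (2 / lam)) ^ (-q - 2)
      = (((‖x‖ ^ 2 + β * t ^ (2 / lam)) ^ q) * (‖x‖ ^ 2 + β * t ^ (2 / lam)) ^ 2)⁻¹ := by
    rw [show -q - 2 = -(q + 2) by ring, Real.rpow_neg hDx.le, Real.rpow_add hDx,
      show (2:ℝ) = ((2:ℕ):ℝ) by norm_num, Real.rpow_natCast]
  have e3 : t ^ (2 / lam - 1) = t ^ (2 / lam) / t := by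
    rw [Real.rpow_sub ht, Real.rpow_one]
  rw [e1, e2, e3]
  have hPne : ((‖x‖ ^ 2 + β * t ^ (2 / lam)) ^ q) ≠ 0 := (Real.rpow_pos_of_pos hDx q).ne'
  have hKne : ((α * t) ^ q) ≠ 0 := (Real.rpow_pos_of_pos ha q).ne'
  have hTne : t ^ (2 / lam) ≠ 0 := (Real.rpow_pos_of_pos ht _).ne'
  rw [hq] at *
  rw [hα, hlam] at *
  field_simp
  ring
end

section
/- (Exponential entropy decay, non-resonant case) Let C > 0 and δ > 0 with δ ≠ 1, and let E : [0,∞) → ℝ be differentiable with E(s) ≥ 0 and E'(s) ≤ -2E(s) + C e^{-δ s} √(E(s)) for all s ≥ 0. Then there exists a constant K > 0, depending only on E(0), C and δ, such that E(s) ≤ K e^{-2 min(1,δ) s} for all s ≥ 0. -/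
/-- **Exponential entropy decay, non-resonant case.** If `C > 0`, `δ > 0`, `δ ≠ 1`, and
`E : [0,∞) → ℝ` is differentiable and nonnegative with
`E'(s) ≤ -2E(s) + C e^(-δs) √(E(s))` for all `s ≥ 0`, then there exists `K > 0`, depending
only on `E(0)`, `C` and `δ`, with `E(s) ≤ K e^(-2 min(1,δ) s)` for all `s ≥ 0`. -/
theorem entropy_decay_nonresonant (C δ : ℝ) (hC : 0 < C) (hδ : 0 < δ) (hδ1 : δ ≠ 1)
    (E : ℝ → ℝ) (hEd : ∀ s ≥ (0 : ℝ), DifferentiableAt ℝ E s)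
    (hEnn : ∀ s ≥ (0 : ℝ), 0 ≤ E s)
    (hineq : ∀ s ≥ (0 : ℝ), deriv E s ≤ -2 * E s + C * Real.exp (-δ * s) * Real.sqrt (E s)) :
    ∃ K > 0, ∀ s ≥ (0 : ℝ), E s ≤ K * Real.exp (-2 * min 1 δ * s) := by
  set H : ℝ → ℝ := fun s => Real.exp (2*s) * E s with hHdef
  set φ : ℝ → ℝ := fun s => Real.sqrt (H s + 1) with hφdef
  set c : ℝ := C / (2*(1-δ)) with hcdef
  set ψ : ℝ → ℝ := fun s => φ s - c * Real.exp ((1-δ)*s) with hψdef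
  have h1δ : (1:ℝ) - δ ≠ 0 := by
    intro h; exact hδ1 (by linarith)
  have hHnn : ∀ s ≥ (0:ℝ), 0 ≤ H s := fun s hs =>
    mul_nonneg (Real.exp_pos _).le (hEnn s hs)
  have hHd : ∀ s ≥ (0:ℝ), HasDerivAt H (Real.exp (2*s) * (2 * E s + deriv E s)) s := by
    intro s hs
    have h1 : HasDerivAt (fun s : ℝ => Real.exp (2*s)) (2 * Real.exp (2*s)) s := by
      simpa [mul_comm] using ((hasDerivAt_id s).const_mul 2).exp
    have h2 := (hEd s hs).hasDerivAt
    have : HasDerivAt (fun y => Real.exp (2*y) * E y) _ s := h1.mul h2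
    convert this using 1
    ring
  have hφd : ∀ s ≥ (0:ℝ),
      HasDerivAt φ (Real.exp (2*s) * (2 * E s + deriv E s) / (2 * Real.sqrt (H s + 1))) s := by
    intro s hs
    have hpos : H s + 1 ≠ 0 := by have := hHnn s hs; positivity
    exact ((hHd s hs).add_const 1).sqrt hpos
  have hderivφ : ∀ s ≥ (0:ℝ), deriv φ s ≤ C/2 * Real.exp ((1-δ)*s) := by
    intro s hs
    rw [(hφd s hs).deriv]
    have hs1 : (0:ℝ) < Real.sqrt (H s + 1) :=
      Real.sqrt_pos.mpr (by have := hHnn s hs; linarith)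
    rw [div_le_iff₀ (by positivity)]
    have hE' := hineq s hs
    have hsqrtE : Real.sqrt (E s) ≤ Real.exp (-s) * Real.sqrt (H s + 1) := by
      have hEH : E s = Real.exp (-(2*s)) * H s := by
        simp only [hHdef, ← mul_assoc, ← Real.exp_add]
        simp
      have h1 : E s ≤ (Real.exp (-s) * Real.sqrt (H s + 1))^2 := by
        have hsq : (Real.exp (-s) * Real.sqrt (H s + 1))^2
            = Real.exp (-(2*s)) * (H s + 1) := by
          rw [mul_pow, ← Real.exp_nat_mul, Real.sq_sqrt (by have := hHnn s hs; linarith)]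
          ring_nf
        rw [hsq, hEH]
        have := Real.exp_pos (-(2*s))
        nlinarith [hHnn s hs]
      calc Real.sqrt (E s) ≤ Real.sqrt ((Real.exp (-s) * Real.sqrt (H s + 1))^2) :=
            Real.sqrt_le_sqrt h1
        _ = Real.exp (-s) * Real.sqrt (H s + 1) :=
            Real.sqrt_sq (by positivity)
    have key : Real.exp (2*s) * (2 * E s + deriv E s)
        ≤ C * Real.exp ((1-δ)*s) * Real.sqrt (H s + 1) := by
      have h1 : 2 * E s + deriv E s ≤ C * Real.exp (-δ*s) * Real.sqrt (E s) := by linarith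
      have h2 : Real.exp (2*s) * (2 * E s + deriv E s)
          ≤ Real.exp (2*s) * (C * Real.exp (-δ*s) * Real.sqrt (E s)) :=
        mul_le_mul_of_nonneg_left h1 (Real.exp_pos _).le
      have h3 : Real.exp (2*s) * (C * Real.exp (-δ*s) * Real.sqrt (E s))
          ≤ Real.exp (2*s) * (C * Real.exp (-δ*s) * (Real.exp (-s) * Real.sqrt (H s + 1))) := by
        apply mul_le_mul_of_nonneg_left _ (Real.exp_pos _).le
        apply mul_le_mul_of_nonneg_left hsqrtE
        positivity
      have h4 : Real.exp (2*s) * (C * Real.exp (-δ*s) * (Real.exp (-s) * Real.sqrt (H s + 1)))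
          = C * Real.exp ((1-δ)*s) * Real.sqrt (H s + 1) := by
        rw [show (1-δ)*s = 2*s + (-δ*s) + (-s) by ring, Real.exp_add, Real.exp_add]
        ring
      linarith
    calc Real.exp (2*s) * (2 * E s + deriv E s)
        ≤ C * Real.exp ((1-δ)*s) * Real.sqrt (H s + 1) := key
      _ = C/2 * Real.exp ((1-δ)*s) * (2 * Real.sqrt (H s + 1)) := by ring
  have hψd : ∀ s ≥ (0:ℝ), HasDerivAt ψ (deriv φ s - C/2 * Real.exp ((1-δ)*s)) s := by
    intro s hs
    have h1 : HasDerivAt (fun s : ℝ => c * Real.exp ((1-δ)*s))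
        (c * ((1-δ) * Real.exp ((1-δ)*s))) s := by
      have := (Real.hasDerivAt_exp ((1-δ)*s)).comp s ((hasDerivAt_id s).const_mul (1-δ))
      simpa [mul_comm] using (this.const_mul c)
    have hc : c * ((1-δ) * Real.exp ((1-δ)*s)) = C/2 * Real.exp ((1-δ)*s) := by
      rw [hcdef]; field_simp
    rw [hc] at h1
    exact (((hφd s hs).sub h1).congr_deriv (by rw [(hφd s hs).deriv]))
  have hanti : AntitoneOn ψ (Set.Ici (0:ℝ)) := by
    apply antitoneOn_of_deriv_nonpos (convex_Ici 0)
    · intro s hs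
      exact (hψd s hs).continuousAt.continuousWithinAt
    · intro s hs
      rw [interior_Ici] at hs
      exact (hψd s (le_of_lt hs)).differentiableAt.differentiableWithinAt
    · intro s hs
      rw [interior_Ici] at hs
      rw [(hψd s hs.le).deriv]
      have := hderivφ s hs.le
      linarith
  have hφbound : ∀ s ≥ (0:ℝ), φ s ≤ φ 0 - c + c * Real.exp ((1-δ)*s) := by
    intro s hs
    have := hanti (Set.self_mem_Ici) (Set.mem_Ici.mpr hs) hs
    simp only [hψdef] at this
    simp only [mul_zero, Real.exp_zero, mul_one] at this
    linarith
  set A : ℝ := φ 0 + |c| with hAdef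
  have hφ0pos : 0 < φ 0 := by
    rw [hφdef]
    exact Real.sqrt_pos.mpr (by have := hHnn 0 le_rfl; linarith)
  have hApos : 0 < A := by
    have : 0 ≤ |c| := abs_nonneg c
    rw [hAdef]; linarith
  refine ⟨A^2, by positivity, ?_⟩
  intro s hs
  set m := min 1 δ with hmdef
  have hφA : φ s ≤ A * Real.exp ((1-m)*s) := by
    rcases lt_or_gt_of_ne hδ1 with hlt | hgt
    · -- δ < 1, m = δ, c > 0
      have hm : m = δ := min_eq_right hlt.le
      have hcpos : 0 < c := by
        rw [hcdef]; apply div_pos hC; nlinarith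
      have habs : |c| = c := abs_of_pos hcpos
      have hexp1 : (1:ℝ) ≤ Real.exp ((1-δ)*s) :=
        Real.one_le_exp (by nlinarith)
      have := hφbound s hs
      rw [hm]
      rw [hAdef, habs]
      nlinarith [hφ0pos]
    · -- δ > 1, m = 1, c < 0
      have hm : m = 1 := min_eq_left hgt.le
      have hcneg : c < 0 := by
        rw [hcdef]
        apply div_neg_of_pos_of_neg hC
        nlinarith
      have habs : |c| = -c := abs_of_neg hcneg
      have hexp1 : Real.exp ((1-δ)*s) ≤ 1 :=
        Real.exp_le_one_iff.mpr (by nlinarith)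
      have := hφbound s hs
      rw [hm]
      simp only [sub_self, zero_mul, Real.exp_zero, mul_one]
      rw [hAdef, habs]
      have hce : 0 < (-c) * Real.exp ((1-δ)*s) :=
        mul_pos (by linarith) (Real.exp_pos _)
      nlinarith
  have hEH : E s ≤ Real.exp (-(2*s)) * (φ s)^2 := by
    have hsq : (φ s)^2 = H s + 1 :=
      Real.sq_sqrt (by have := hHnn s hs; linarith)
    have hEH2 : E s = Real.exp (-(2*s)) * H s := by
      simp only [hHdef, ← mul_assoc, ← Real.exp_add]
      simp
    rw [hEH2, hsq]
    have := Real.exp_pos (-(2*s))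
    nlinarith
  have hφsq : (φ s)^2 ≤ A^2 * Real.exp ((1-m)*s)^2 := by
    have hφnn : 0 ≤ φ s := Real.sqrt_nonneg _
    nlinarith [hφA, Real.exp_pos ((1-m)*s)]
  calc E s ≤ Real.exp (-(2*s)) * (φ s)^2 := hEH
    _ ≤ Real.exp (-(2*s)) * (A^2 * Real.exp ((1-m)*s)^2) := by
        exact mul_le_mul_of_nonneg_left hφsq (Real.exp_pos _).le
    _ = A^2 * Real.exp (-2 * m * s) := by
        have hx : -(2*s) + ((1-m)*s + (1-m)*s) = -2*m*s := by ring
        rw [show Real.exp ((1-m)*s)^2 = Real.exp ((1-m)*s) * Real.exp ((1-m)*s) from pow_two _,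
          ← Real.exp_add, mul_left_comm, ← Real.exp_add, hx]
end
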